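/- arXiv:1502.05942 — 2 statements merged into one kernel-verified Lean document; each statement's English description precedes it below -/
import Mathlib

section
/- Median oscillation decomposition for general measures: for any locally finite Borel measure μ, any measurable f, any 0 < λ < 1/2, and any dyadic cube F₀ with 0 < μ(F₀) < ∞, there exists a (1−2λ)-sparse collection F of dyadic subcubes of F₀, containing F₀, such that |f − m(f, F̂₀)| 1_{F₀} ≤ C ∑_{F ∈ F} (ω_λ(f;F) + |m(f,F) − m(f,F̂)|) 1_F holds μ-almost everywhere, where C depends only on λ. -/
open MeasureTheory Set ENNReal NNReal

noncomputable section

/-- A dyadic cube in `ℝ^d`: side length `2^n`, lower-left corner `m * 2^n`. -/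
structure DyadicCube (d : ℕ) where
  n : ℤ
  m : Fin d → ℤ

namespace DyadicCube

/-- The underlying set of a dyadic cube. -/
def toSet {d : ℕ} (Q : DyadicCube d) : Set (Fin d → ℝ) :=
  {x | ∀ i, (Q.m i : ℝ) * 2 ^ Q.n ≤ x i ∧ x i < ((Q.m i : ℝ) + 1) * 2 ^ Q.n}

/-- The dyadic parent of a dyadic cube. -/
def parent {d : ℕ} (Q : DyadicCube d) : DyadicCube d :=
  ⟨Q.n + 1, fun i => Int.fdiv (Q.m i) 2⟩

/-- The `k`-th dyadic ancestor of a dyadic cube. -/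
def ancestor {d : ℕ} (k : ℕ) (Q : DyadicCube d) : DyadicCube d :=
  parent^[k] Q

end DyadicCube

/-- `m` is a median of `f` on `Q` (w.r.t. `μ`). -/
def IsMedian {d : ℕ} (μ : Measure (Fin d → ℝ)) (f : (Fin d → ℝ) → ℝ)
    (Q : Set (Fin d → ℝ)) (m : ℝ) : Prop :=
  μ (Q ∩ {x | m < f x}) ≤ μ Q / 2 ∧ μ (Q ∩ {x | f x < m}) ≤ μ Q / 2

/-- The relative median oscillation `r_λ(f; Q)` of `f` about zero on `Q`. -/
def rOsc {d : ℕ} (μ : Measure (Fin d → ℝ)) (lam : ℝ) (f : (Fin d → ℝ) → ℝ)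
    (Q : Set (Fin d → ℝ)) : ℝ :=
  sInf {r : ℝ | 0 ≤ r ∧ μ (Q ∩ {x | r < |f x|}) ≤ ENNReal.ofReal lam * μ Q}

/-- The median oscillation `ω_λ(f; Q)`. -/
def mOsc {d : ℕ} (μ : Measure (Fin d → ℝ)) (lam : ℝ) (f : (Fin d → ℝ) → ℝ)
    (Q : Set (Fin d → ℝ)) : ℝ :=
  ⨅ c : ℝ, rOsc μ lam (fun x => f x - c) Q

/-- The average `⟨f⟩_Q = (1/μ(Q)) ∫_Q f dμ`. -/
def avg {d : ℕ} (μ : Measure (Fin d → ℝ)) (f : (Fin d → ℝ) → ℝ)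
    (Q : Set (Fin d → ℝ)) : ℝ :=
  (∫ x in Q, f x ∂μ) / (μ Q).toReal

/-- The `𝒮`-children of `F`: maximal members of `𝒮` strictly contained in `F`. -/
def sparseChildren {d : ℕ} (𝒮 : Set (DyadicCube d)) (F : DyadicCube d) :
    Set (DyadicCube d) :=
  {F' | F' ∈ 𝒮 ∧ F'.toSet ⊂ F.toSet ∧
    ∀ G ∈ 𝒮, G.toSet ⊂ F.toSet → F'.toSet ⊆ G.toSet → G = F'}

namespace DyadicCube

variable {d : ℕ}

lemma two_zpow_pos (n : ℤ) : (0:ℝ) < 2 ^ n := zpow_pos (by norm_num) n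

lemma mem_toSet_iff {Q : DyadicCube d} {x : Fin d → ℝ} :
    x ∈ Q.toSet ↔ ∀ i, ⌊x i / (2:ℝ) ^ Q.n⌋ = Q.m i := by
  unfold toSet
  simp only [Set.mem_setOf_eq]
  refine forall_congr' fun i => ?_
  rw [Int.floor_eq_iff, le_div_iff₀ (two_zpow_pos Q.n), div_lt_iff₀ (two_zpow_pos Q.n)]

/-- The dyadic cube of scale `n` containing `x`. -/
def cubeAt (n : ℤ) (x : Fin d → ℝ) : DyadicCube d := ⟨n, fun i => ⌊x i / (2:ℝ) ^ n⌋⟩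

@[simp] lemma cubeAt_n (n : ℤ) (x : Fin d → ℝ) : (cubeAt n x).n = n := rfl

lemma mem_cubeAt (n : ℤ) (x : Fin d → ℝ) : x ∈ (cubeAt n x).toSet :=
  mem_toSet_iff.2 fun _ => rfl

lemma eq_cubeAt_of_mem {Q : DyadicCube d} {x : Fin d → ℝ} (h : x ∈ Q.toSet) :
    Q = cubeAt Q.n x := by
  obtain ⟨n, m⟩ := Q
  simp only [cubeAt, mk.injEq, true_and]
  funext i
  exact (mem_toSet_iff.1 h i).symm

lemma floor_step (x : ℝ) (n : ℤ) :
    ⌊x / (2:ℝ) ^ (n + 1)⌋ = Int.fdiv ⌊x / (2:ℝ) ^ n⌋ 2 := by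
  have h2 : (0:ℝ) < 2 ^ n := two_zpow_pos n
  set k := ⌊x / (2:ℝ) ^ n⌋ with hk
  have h1 : (k:ℝ) ≤ x / 2 ^ n := Int.floor_le _
  have h1' : x / 2 ^ n < k + 1 := Int.lt_floor_add_one _
  have hqr : 2 * Int.fdiv k 2 + Int.fmod k 2 = k := Int.mul_fdiv_add_fmod k 2
  have hr0 : 0 ≤ Int.fmod k 2 := Int.fmod_nonneg_of_pos k (by norm_num)
  have hr2 : Int.fmod k 2 < 2 := Int.fmod_lt_of_pos k (by norm_num)
  set q := Int.fdiv k 2 with hq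
  have hpow : (2:ℝ) ^ (n + 1) = 2 ^ n * 2 := by
    rw [zpow_add_one₀ (by norm_num : (2:ℝ) ≠ 0)]
  have hx1 : (k:ℝ) * 2 ^ n ≤ x := by
    rw [← le_div_iff₀ h2]; linarith [h1]
  have hx2 : x < ((k:ℝ) + 1) * 2 ^ n := by
    rw [← div_lt_iff₀ h2]; linarith [h1']
  refine Int.floor_eq_iff.2 ⟨?_, ?_⟩
  · rw [le_div_iff₀ (two_zpow_pos (n+1)), hpow]
    have hq2 : 2*(q:ℝ) ≤ (k : ℝ) := by exact_mod_cast (show (2*q:ℤ) ≤ k by omega)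
    nlinarith [mul_le_mul_of_nonneg_right hq2 (le_of_lt h2)]
  · rw [div_lt_iff₀ (two_zpow_pos (n+1)), hpow]
    have hq2 : (k:ℝ) + 1 ≤ 2*(q:ℝ) + 2 := by exact_mod_cast (show (k:ℤ)+1 ≤ 2*q+2 by omega)
    nlinarith [mul_le_mul_of_nonneg_right hq2 (le_of_lt h2)]

lemma parent_cubeAt (n : ℤ) (x : Fin d → ℝ) :
    (cubeAt n x).parent = cubeAt (n + 1) x := by
  simp only [parent, cubeAt, mk.injEq, true_and]
  funext i
  exact (floor_step (x i) n).symm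

lemma subset_parent (Q : DyadicCube d) : Q.toSet ⊆ Q.parent.toSet := by
  intro x hx
  rw [eq_cubeAt_of_mem hx, parent_cubeAt]
  exact mem_cubeAt _ _

@[simp] lemma parent_n (Q : DyadicCube d) : Q.parent.n = Q.n + 1 := rfl

lemma cubeAt_subset_cubeAt {x : Fin d → ℝ} {n n' : ℤ} (h : n ≤ n') :
    (cubeAt n x).toSet ⊆ (cubeAt n' x).toSet := by
  obtain ⟨k, rfl⟩ : ∃ k : ℕ, n' = n + k := ⟨(n' - n).toNat, by omega⟩
  induction k with
  | zero => simp
  | succ k ih =>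
    refine ih (by omega) |>.trans ?_
    have h2 : (n + ((k+1:ℕ)):ℤ) = (n + k) + 1 := by push_cast; ring
    rw [h2, ← parent_cubeAt]
    exact subset_parent _

lemma subset_of_mem_of_le {Q : DyadicCube d} {x : Fin d → ℝ} {n : ℤ}
    (hx : x ∈ Q.toSet) (h : n ≤ Q.n) : (cubeAt n x).toSet ⊆ Q.toSet := by
  rw [eq_cubeAt_of_mem hx]
  exact cubeAt_subset_cubeAt h

/-- Dichotomy: if two dyadic cubes intersect, the one with smaller scale is contained. -/
lemma subset_of_inter_nonempty {P Q : DyadicCube d} (h : P.n ≤ Q.n)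
    (hne : (P.toSet ∩ Q.toSet).Nonempty) : P.toSet ⊆ Q.toSet := by
  obtain ⟨x, hxP, hxQ⟩ := hne
  rw [eq_cubeAt_of_mem hxP]
  exact subset_of_mem_of_le hxQ h

/-- The lower-left corner of a dyadic cube. -/
def corner (Q : DyadicCube d) : Fin d → ℝ := fun i => (Q.m i : ℝ) * 2 ^ Q.n

lemma corner_mem (Q : DyadicCube d) : Q.corner ∈ Q.toSet := by
  intro i
  refine ⟨le_refl _, ?_⟩
  show (Q.m i:ℝ) * 2 ^ Q.n < ((Q.m i:ℝ)+1) * 2^Q.n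
  nlinarith [two_zpow_pos Q.n]

lemma toSet_nonempty (Q : DyadicCube d) : Q.toSet.Nonempty := ⟨Q.corner, Q.corner_mem⟩

lemma scale_le_of_subset (hd : 0 < d) {P Q : DyadicCube d}
    (h : P.toSet ⊆ Q.toSet) : P.n ≤ Q.n := by
  by_contra hlt
  push_neg at hlt
  set i0 : Fin d := ⟨0, hd⟩
  set a := (P.m i0 : ℝ) * 2 ^ P.n with ha
  set t := a + 2 ^ Q.n with ht
  have hpow : (2:ℝ) ^ Q.n < 2 ^ P.n := zpow_lt_zpow_right₀ (by norm_num) hlt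
  have hy : Function.update P.corner i0 t ∈ P.toSet := by
    intro i
    rcases eq_or_ne i i0 with hi | hne
    · subst hi
      rw [Function.update_self]
      have h1 : ((P.m i0:ℝ)+1) * 2^P.n = a + 2^P.n := by rw [ha]; ring
      constructor
      · show a ≤ t
        have := two_zpow_pos Q.n
        rw [ht]; linarith
      · show t < ((P.m i0:ℝ)+1) * 2^P.n
        rw [h1, ht]; linarith
    · rw [Function.update_of_ne hne]
      exact P.corner_mem i
  have hx := h P.corner_mem i0
  have hy' := h hy i0
  rw [Function.update_self] at hy'
  have hb1 : (Q.m i0 : ℝ) * 2 ^ Q.n ≤ a := hx.1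
  have hb2 : t < ((Q.m i0:ℝ)+1) * 2 ^ Q.n := hy'.2
  have : ((Q.m i0:ℝ)+1) * 2^Q.n = (Q.m i0:ℝ) * 2^Q.n + 2^Q.n := by ring
  rw [this] at hb2
  rw [ht] at hb2
  linarith

lemma toSet_inj (hd : 0 < d) {P Q : DyadicCube d}
    (h : P.toSet = Q.toSet) : P = Q := by
  have hn : P.n = Q.n :=
    le_antisymm (scale_le_of_subset hd h.subset) (scale_le_of_subset hd h.symm.subset)
  obtain ⟨x, hx⟩ := P.toSet_nonempty
  have hxQ : x ∈ Q.toSet := h ▸ hx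
  rw [eq_cubeAt_of_mem hx, eq_cubeAt_of_mem hxQ, hn]

lemma scale_lt_of_ssubset (hd : 0 < d) {P Q : DyadicCube d}
    (h : P.toSet ⊂ Q.toSet) : P.n < Q.n := by
  have hle := scale_le_of_subset hd h.subset
  rcases lt_or_eq_of_le hle with hlt | heq
  · exact hlt
  · exfalso
    obtain ⟨x, hx⟩ := P.toSet_nonempty
    have hxQ : x ∈ Q.toSet := h.subset hx
    have : P = Q := by rw [eq_cubeAt_of_mem hx, eq_cubeAt_of_mem hxQ, heq]
    exact h.ne (by rw [this])

noncomputable instance : DecidableEq (DyadicCube d) := fun _ _ => Classical.propDecidable _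

lemma measurableSet_toSet (Q : DyadicCube d) : MeasurableSet Q.toSet := by
  have : Q.toSet = ⋂ i, (fun x : Fin d → ℝ => x i) ⁻¹'
      (Set.Ico ((Q.m i : ℝ) * 2 ^ Q.n) (((Q.m i : ℝ) + 1) * 2 ^ Q.n)) := by
    ext x
    simp [toSet, Set.mem_Ico]
  rw [this]
  exact MeasurableSet.iInter fun i => measurableSet_Ico.preimage (measurable_pi_apply i)

instance : Countable (DyadicCube d) := by
  have hinj : Function.Injective (fun Q : DyadicCube d => (Q.n, Q.m)) := by
    rintro ⟨n1, m1⟩ ⟨n2, m2⟩ h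
    simpa using h
  exact hinj.countable

end DyadicCube

/-! ### Scalar lemmas about `rOsc`, `mOsc`, medians -/

section Scalar

variable {d : ℕ} {μ : Measure (Fin d → ℝ)} {lam : ℝ} {g f : (Fin d → ℝ) → ℝ}
  {A : Set (Fin d → ℝ)}

lemma rOsc_nonneg : 0 ≤ rOsc μ lam g A :=
  Real.sInf_nonneg fun _ hx => hx.1

lemma mOsc_nonneg : 0 ≤ mOsc μ lam f A :=
  le_ciInf fun _ => rOsc_nonneg

lemma rOsc_set_nonempty (hlam0 : 0 < lam) (hA : MeasurableSet A) (hg : Measurable g)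
    (hfin : μ A < ⊤) :
    {r : ℝ | 0 ≤ r ∧ μ (A ∩ {x | r < |g x|}) ≤ ENNReal.ofReal lam * μ A}.Nonempty := by
  rcases eq_zero_or_pos (μ A) with h0 | hpos
  · refine ⟨0, le_refl _, ?_⟩
    calc μ (A ∩ {x | (0:ℝ) < |g x|}) ≤ μ A := measure_mono inter_subset_left
    _ = 0 := h0
    _ ≤ _ := zero_le
  · have hpos' : 0 < ENNReal.ofReal lam * μ A :=
      ENNReal.mul_pos (by simp [hlam0, ENNReal.ofReal_pos]) hpos.ne'
    set s : ℕ → Set (Fin d → ℝ) := fun n => A ∩ {x | (n:ℝ) < |g x|} with hs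
    have hmeas : ∀ n, NullMeasurableSet (s n) μ := fun n =>
      (hA.inter ((hg.abs) measurableSet_Ioi)).nullMeasurableSet
    have hanti : Antitone s := by
      intro a b hab x hx
      refine ⟨hx.1, ?_⟩
      have h1 : ((a:ℝ)) ≤ b := by exact_mod_cast hab
      have h2 : (b:ℝ) < |g x| := hx.2
      show (a:ℝ) < |g x|
      linarith
    have hiInter : (⋂ n, s n) = ∅ := by
      ext x
      simp only [Set.mem_iInter, Set.mem_empty_iff_false, iff_false]
      intro h
      obtain ⟨n, hn⟩ := exists_nat_gt |g x|
      exact absurd ((h n).2) (not_lt.2 hn.le)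
    have htends := MeasureTheory.tendsto_measure_iInter_atTop (μ := μ) hmeas hanti
      ⟨0, (lt_of_le_of_lt (measure_mono inter_subset_left) hfin).ne⟩
    rw [hiInter, measure_empty] at htends
    have := htends.eventually (gt_mem_nhds hpos')
    obtain ⟨n, hn⟩ := this.exists
    exact ⟨n, Nat.cast_nonneg n, hn.le⟩

lemma measure_rOsc_lt_le (hlam0 : 0 < lam) (hA : MeasurableSet A) (hg : Measurable g)
    (hfin : μ A < ⊤) :
    μ (A ∩ {x | rOsc μ lam g A < |g x|}) ≤ ENNReal.ofReal lam * μ A := by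
  set S := {r : ℝ | 0 ≤ r ∧ μ (A ∩ {x | r < |g x|}) ≤ ENNReal.ofReal lam * μ A} with hS
  have hne := rOsc_set_nonempty hlam0 hA hg hfin
  have hbdd : BddBelow S := ⟨0, fun x hx => hx.1⟩
  have hcover : A ∩ {x | sInf S < |g x|} =
      ⋃ n : ℕ, A ∩ {x | sInf S + 1/((n:ℝ)+1) < |g x|} := by
    ext x
    simp only [Set.mem_inter_iff, Set.mem_setOf_eq, Set.mem_iUnion]
    constructor
    · rintro ⟨hxA, hx⟩
      obtain ⟨n, hn⟩ := exists_nat_one_div_lt (sub_pos.2 hx)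
      exact ⟨n, hxA, by linarith⟩
    · rintro ⟨n, hxA, hx⟩
      have : (0:ℝ) < 1/((n:ℝ)+1) := by positivity
      exact ⟨hxA, by linarith⟩
  have hdir : Directed (fun x1 x2 => x1 ⊆ x2)
      (fun n : ℕ => A ∩ {x | sInf S + 1/((n:ℝ)+1) < |g x|}) := by
    intro a b
    have hma : ((a:ℝ)) ≤ ((max a b : ℕ):ℝ) := by exact_mod_cast le_max_left a b
    have hmb : ((b:ℝ)) ≤ ((max a b : ℕ):ℝ) := by exact_mod_cast le_max_right a b
    have h2a : 1/(((max a b : ℕ):ℝ)+1) ≤ 1/((a:ℝ)+1) :=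
      one_div_le_one_div_of_le (by positivity) (by linarith)
    have h2b : 1/(((max a b : ℕ):ℝ)+1) ≤ 1/((b:ℝ)+1) :=
      one_div_le_one_div_of_le (by positivity) (by linarith)
    refine ⟨max a b, fun x hx => ⟨hx.1, ?_⟩, fun x hx => ⟨hx.1, ?_⟩⟩
    · have h3 : sInf S + 1/((a:ℝ)+1) < |g x| := hx.2
      show sInf S + 1/(((max a b : ℕ):ℝ)+1) < |g x|
      linarith
    · have h3 : sInf S + 1/((b:ℝ)+1) < |g x| := hx.2
      show sInf S + 1/(((max a b : ℕ):ℝ)+1) < |g x|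
      linarith
  show μ (A ∩ {x | sInf S < |g x|}) ≤ ENNReal.ofReal lam * μ A
  rw [hcover, hdir.measure_iUnion]
  refine iSup_le fun n => ?_
  obtain ⟨r, hrS, hr⟩ := Real.lt_sInf_add_pos hne
    (show (0:ℝ) < 1/((n:ℝ)+1) by positivity)
  refine le_trans (measure_mono (inter_subset_inter_right _ fun x hx => ?_)) hrS.2
  have h3 : sInf S + 1/((n:ℝ)+1) < |g x| := hx
  show r < |g x|
  linarith

lemma abs_median_sub_le {m c r : ℝ} (hfin : μ A < ⊤) (hmed : IsMedian μ f A m)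
    (hr : 2 * μ (A ∩ {x | r < |f x - c|}) < μ A) : |m - c| ≤ r := by
  set t := μ (A ∩ {x | r < |f x - c|}) with hts
  have hAfin : μ A ≠ ⊤ := hfin.ne
  have hhalf : μ A / 2 + μ A / 2 = μ A := ENNReal.add_halves _
  have hhalf_ne : μ A / 2 ≠ ⊤ := by
    intro h
    exact hAfin (by simpa [h] using hhalf.symm)
  have ht_lt : t < μ A / 2 := by
    by_contra hcon
    push_neg at hcon
    have : μ A ≤ 2 * t := by
      calc μ A = μ A / 2 + μ A / 2 := hhalf.symm
      _ ≤ t + t := add_le_add hcon hcon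
      _ = 2 * t := (two_mul t).symm
    exact absurd (lt_of_lt_of_le hr this) (lt_irrefl _)
  rw [abs_le]
  constructor
  · -- -r ≤ m - c, i.e. ¬ (m < c - r)
    by_contra hcon
    push_neg at hcon
    have hsub : A ∩ {x | ¬ (m < f x)} ⊆ A ∩ {x | r < |f x - c|} := by
      rintro x ⟨hxA, hx⟩
      simp only [Set.mem_setOf_eq, not_lt] at hx
      refine ⟨hxA, ?_⟩
      simp only [Set.mem_setOf_eq]
      rw [abs_sub_comm]
      calc r < c - m := by linarith
      _ ≤ c - f x := by linarith
      _ ≤ |c - f x| := le_abs_self _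
    have hcoverA : A ⊆ (A ∩ {x | m < f x}) ∪ (A ∩ {x | ¬ (m < f x)}) := by
      intro x hx
      by_cases h : m < f x
      · exact Or.inl ⟨hx, h⟩
      · exact Or.inr ⟨hx, h⟩
    have : μ A < μ A := by
      calc μ A ≤ μ (A ∩ {x | m < f x}) + μ (A ∩ {x | ¬ (m < f x)}) :=
        le_trans (measure_mono hcoverA) (measure_union_le _ _)
      _ ≤ μ A / 2 + t := add_le_add hmed.1 (measure_mono hsub)
      _ < μ A / 2 + μ A / 2 := ENNReal.add_lt_add_left hhalf_ne ht_lt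
      _ = μ A := hhalf
    exact absurd this (lt_irrefl _)
  · -- m - c ≤ r
    by_contra hcon
    push_neg at hcon
    have hsub : A ∩ {x | ¬ (f x < m)} ⊆ A ∩ {x | r < |f x - c|} := by
      rintro x ⟨hxA, hx⟩
      simp only [Set.mem_setOf_eq, not_lt] at hx
      refine ⟨hxA, ?_⟩
      simp only [Set.mem_setOf_eq]
      calc r < m - c := by linarith
      _ ≤ f x - c := by linarith
      _ ≤ |f x - c| := le_abs_self _
    have hcoverA : A ⊆ (A ∩ {x | f x < m}) ∪ (A ∩ {x | ¬ (f x < m)}) := by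
      intro x hx
      by_cases h : f x < m
      · exact Or.inl ⟨hx, h⟩
      · exact Or.inr ⟨hx, h⟩
    have : μ A < μ A := by
      calc μ A ≤ μ (A ∩ {x | f x < m}) + μ (A ∩ {x | ¬ (f x < m)}) :=
        le_trans (measure_mono hcoverA) (measure_union_le _ _)
      _ ≤ μ A / 2 + t := add_le_add hmed.2 (measure_mono hsub)
      _ < μ A / 2 + μ A / 2 := ENNReal.add_lt_add_left hhalf_ne ht_lt
      _ = μ A := hhalf
    exact absurd this (lt_irrefl _)

lemma rOsc_le_of_pointwise {g₁ g₂ : (Fin d → ℝ) → ℝ} {δ : ℝ}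
    (hlam0 : 0 < lam) (hA : MeasurableSet A) (hg₂ : Measurable g₂) (hfin : μ A < ⊤)
    (hδ : 0 ≤ δ) (hpt : ∀ x, |g₁ x| ≤ |g₂ x| + δ) :
    rOsc μ lam g₁ A ≤ δ + rOsc μ lam g₂ A := by
  refine csInf_le ⟨0, fun x hx => hx.1⟩ ?_
  refine ⟨add_nonneg hδ rOsc_nonneg, ?_⟩
  refine le_trans (measure_mono (inter_subset_inter_right _ fun x hx => ?_))
    (measure_rOsc_lt_le hlam0 hA hg₂ hfin)
  simp only [Set.mem_setOf_eq] at hx ⊢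
  have := hpt x
  linarith

end Scalar

section Scalar2

variable {d : ℕ} {μ : Measure (Fin d → ℝ)} {lam : ℝ} {f : (Fin d → ℝ) → ℝ}
  {A : Set (Fin d → ℝ)}

lemma two_lam_mul_lt (hlam0 : 0 < lam) (hlam1 : lam < 1/2) {a : ℝ≥0∞}
    (hpos : 0 < a) (hfin : a < ⊤) :
    2 * (ENNReal.ofReal lam * a) < a := by
  have h1 : 2 * ENNReal.ofReal lam = ENNReal.ofReal (2 * lam) := by
    rw [ENNReal.ofReal_mul (by norm_num : (0:ℝ) ≤ 2)]
    norm_num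
  rw [← mul_assoc, h1]
  calc ENNReal.ofReal (2 * lam) * a < 1 * a := by
        rw [ENNReal.mul_lt_mul_iff_left hpos.ne' hfin.ne]
        rw [ENNReal.ofReal_lt_one]
        linarith
  _ = a := one_mul a

lemma abs_med_sub_le_rOsc {m c : ℝ} (hlam0 : 0 < lam) (hlam1 : lam < 1/2)
    (hA : MeasurableSet A) (hf : Measurable f) (hpos : 0 < μ A) (hfin : μ A < ⊤)
    (hmed : IsMedian μ f A m) :
    |m - c| ≤ rOsc μ lam (fun x => f x - c) A := by
  refine abs_median_sub_le hfin hmed ?_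
  calc 2 * μ (A ∩ {x | rOsc μ lam (fun x => f x - c) A < |f x - c|})
      ≤ 2 * (ENNReal.ofReal lam * μ A) := by
        refine mul_le_mul_right (measure_rOsc_lt_le hlam0 hA (hf.sub measurable_const) hfin) 2
  _ < μ A := two_lam_mul_lt hlam0 hlam1 hpos hfin

lemma rOsc_med_le_two_mOsc {m : ℝ} (hlam0 : 0 < lam) (hlam1 : lam < 1/2)
    (hA : MeasurableSet A) (hf : Measurable f) (hpos : 0 < μ A) (hfin : μ A < ⊤)
    (hmed : IsMedian μ f A m) :
    rOsc μ lam (fun x => f x - m) A ≤ 2 * mOsc μ lam f A := by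
  have key : ∀ c : ℝ, rOsc μ lam (fun x => f x - m) A ≤
      2 * rOsc μ lam (fun x => f x - c) A := by
    intro c
    have h1 : |m - c| ≤ rOsc μ lam (fun x => f x - c) A :=
      abs_med_sub_le_rOsc hlam0 hlam1 hA hf hpos hfin hmed
    have h2 : rOsc μ lam (fun x => f x - m) A ≤
        |m - c| + rOsc μ lam (fun x => f x - c) A := by
      refine rOsc_le_of_pointwise hlam0 hA (hf.sub measurable_const) hfin (abs_nonneg _) ?_
      intro x
      have : f x - m = (f x - c) - (m - c) := by ring
      rw [this]
      calc |(f x - c) - (m - c)| ≤ |f x - c| + |m - c| := abs_sub _ _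
      _ = _ := rfl
    linarith
  have h3 : rOsc μ lam (fun x => f x - m) A / 2 ≤ mOsc μ lam f A := by
    refine le_ciInf fun c => ?_
    have := key c
    linarith
  linarith

end Scalar2

/-! ### Approximation by unions of dyadic cubes -/

section Approx

variable {d : ℕ}

open DyadicCube

lemma isOpen_eq_iUnion_cubes {U : Set (Fin d → ℝ)} (hU : IsOpen U) :
    U = ⋃ Q : {Q : DyadicCube d // Q.toSet ⊆ U}, (Q : DyadicCube d).toSet := by
  ext x
  constructor
  · intro hx
    obtain ⟨ε, hε, hball⟩ := Metric.isOpen_iff.1 hU x hx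
    obtain ⟨k, hk⟩ := exists_pow_lt_of_lt_one hε (by norm_num : (1/2:ℝ) < 1)
    set n : ℤ := -(k:ℤ) with hn
    have hpow : (2:ℝ) ^ n ≤ (1/2:ℝ)^k := by
      rw [hn, zpow_neg, zpow_natCast, one_div, inv_pow]
    have hsub : (cubeAt n x).toSet ⊆ U := by
      intro y hy
      refine hball ?_
      have hxQ := mem_cubeAt n x
      rw [Metric.mem_ball, dist_pi_lt_iff hε]
      intro i
      have h1 := hy i
      have h2 := hxQ i
      simp only [cubeAt_n] at h1 h2
      have e : ((((cubeAt n x).m i):ℝ)+1) * 2^n = (((cubeAt n x).m i):ℝ) * 2^n + 2^n := by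
        ring
      rw [e] at h1 h2
      rw [Real.dist_eq, abs_sub_lt_iff]
      have hp := two_zpow_pos n
      constructor <;> linarith
    exact Set.mem_iUnion.2 ⟨⟨cubeAt n x, hsub⟩, mem_cubeAt n x⟩
  · intro hx
    obtain ⟨⟨Q, hQU⟩, hxQ⟩ := Set.mem_iUnion.1 hx
    exact hQU hxQ

lemma borel_eq_generateFrom_cubes :
    (inferInstance : MeasurableSpace (Fin d → ℝ)) =
      MeasurableSpace.generateFrom {S | ∃ Q : DyadicCube d, S = Q.toSet} := by
  refine le_antisymm ?_ (MeasurableSpace.generateFrom_le ?_)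
  · rw [(BorelSpace.measurable_eq (α := Fin d → ℝ))]
    refine MeasurableSpace.generateFrom_le fun s hs => ?_
    rw [isOpen_eq_iUnion_cubes hs]
    exact MeasurableSet.iUnion fun Q =>
      MeasurableSpace.measurableSet_generateFrom ⟨Q.1, rfl⟩
  · rintro S ⟨Q, rfl⟩
    exact Q.measurableSet_toSet

/-- `U` is a countable union of dyadic cubes of scale at most `s`. -/
def IsCubeUnion (s : ℤ) (U : Set (Fin d → ℝ)) : Prop :=
  ∃ T : Set (DyadicCube d), (∀ Q ∈ T, Q.n ≤ s) ∧ U = ⋃ Q ∈ T, Q.toSet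

lemma IsCubeUnion.measurableSet {s : ℤ} {U : Set (Fin d → ℝ)}
    (h : IsCubeUnion s U) : MeasurableSet U := by
  obtain ⟨T, -, rfl⟩ := h
  exact MeasurableSet.biUnion T.to_countable fun Q _ => Q.measurableSet_toSet

lemma IsCubeUnion.member_subset {T : Set (DyadicCube d)} {Q : DyadicCube d}
    (hQ : Q ∈ T) : Q.toSet ⊆ ⋃ Q' ∈ T, DyadicCube.toSet Q' :=
  Set.subset_biUnion_of_mem hQ

lemma isCubeUnion_iUnion {s : ℤ} {U : ℕ → Set (Fin d → ℝ)}
    (h : ∀ n, IsCubeUnion s (U n)) : IsCubeUnion s (⋃ n, U n) := by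
  choose T hT hUT using h
  refine ⟨⋃ n, T n, ?_, ?_⟩
  · intro Q hQ
    obtain ⟨n, hn⟩ := Set.mem_iUnion.1 hQ
    exact hT n Q hn
  · simp only [Set.biUnion_iUnion]
    exact iUnion_congr hUT

lemma isCubeUnion_empty {s : ℤ} : IsCubeUnion s (∅ : Set (Fin d → ℝ)) :=
  ⟨∅, by simp, by simp⟩

lemma isCubeUnion_univ {s : ℤ} : IsCubeUnion s (Set.univ : Set (Fin d → ℝ)) := by
  refine ⟨{Q | Q.n = s}, fun Q hQ => le_of_eq hQ, ?_⟩
  ext x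
  simp only [Set.mem_univ, true_iff, Set.mem_iUnion]
  exact ⟨cubeAt s x, rfl, mem_cubeAt s x⟩

lemma isCubeUnion_toSet (Q : DyadicCube d) (s : ℤ) : IsCubeUnion s Q.toSet := by
  by_cases h : Q.n ≤ s
  · exact ⟨{Q}, by simpa using h, by simp⟩
  · push_neg at h
    refine ⟨{Q' | Q'.n = s ∧ Q'.toSet ⊆ Q.toSet}, fun Q' hQ' => le_of_eq hQ'.1, ?_⟩
    ext x
    simp only [Set.mem_iUnion]
    constructor
    · intro hx
      exact ⟨cubeAt s x, ⟨rfl, subset_of_mem_of_le hx h.le⟩, mem_cubeAt s x⟩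
    · rintro ⟨Q', ⟨-, hsub⟩, hx⟩
      exact hsub hx

lemma isCubeUnion_inter {s : ℤ} {U V : Set (Fin d → ℝ)}
    (hU : IsCubeUnion s U) (hV : IsCubeUnion s V) : IsCubeUnion s (U ∩ V) := by
  obtain ⟨TU, hTUs, rfl⟩ := hU
  obtain ⟨TV, hTVs, rfl⟩ := hV
  refine ⟨{Q | Q ∈ TU ∧ Q.toSet ⊆ ⋃ Q' ∈ TV, DyadicCube.toSet Q'} ∪
    {Q | Q ∈ TV ∧ Q.toSet ⊆ ⋃ Q' ∈ TU, DyadicCube.toSet Q'}, ?_, ?_⟩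
  · rintro Q (⟨hQ, -⟩ | ⟨hQ, -⟩)
    · exact hTUs Q hQ
    · exact hTVs Q hQ
  · ext x
    constructor
    · rintro ⟨hxU, hxV⟩
      obtain ⟨QU, hQU, hxQU⟩ := by simpa only [Set.mem_iUnion] using hxU
      obtain ⟨QV, hQV, hxQV⟩ := by simpa only [Set.mem_iUnion] using hxV
      rcases le_total QU.n QV.n with hle | hle
      · have hsub : QU.toSet ⊆ QV.toSet :=
          subset_of_inter_nonempty hle ⟨x, hxQU, hxQV⟩
        refine Set.mem_biUnion (Or.inl ⟨hQU, ?_⟩) hxQU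
        exact hsub.trans (IsCubeUnion.member_subset hQV)
      · have hsub : QV.toSet ⊆ QU.toSet :=
          subset_of_inter_nonempty hle ⟨x, hxQV, hxQU⟩
        refine Set.mem_biUnion (Or.inr ⟨hQV, ?_⟩) hxQV
        exact hsub.trans (IsCubeUnion.member_subset hQU)
    · intro hx
      obtain ⟨Q, hQ, hxQ⟩ := by simpa only [Set.mem_iUnion] using hx
      rcases hQ with ⟨hQ, hsub⟩ | ⟨hQ, hsub⟩
      · exact ⟨IsCubeUnion.member_subset hQ hxQ, hsub hxQ⟩
      · exact ⟨hsub hxQ, IsCubeUnion.member_subset hQ hxQ⟩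

lemma isCubeUnion_compl_cube {s : ℤ} (Q : DyadicCube d) (hs : Q.n ≤ s) :
    IsCubeUnion s Q.toSetᶜ := by
  refine ⟨{Q' | Q'.n = Q.n ∧ Q' ≠ Q}, fun Q' hQ' => hQ'.1 ▸ hs, ?_⟩
  ext x
  simp only [Set.mem_compl_iff, Set.mem_iUnion]
  constructor
  · intro hx
    refine ⟨cubeAt Q.n x, ⟨rfl, ?_⟩, mem_cubeAt Q.n x⟩
    intro heq
    exact hx (heq ▸ mem_cubeAt Q.n x)
  · rintro ⟨Q', ⟨hn, hne⟩, hxQ'⟩ hx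
    exact hne ((eq_cubeAt_of_mem hxQ').trans (hn ▸ (eq_cubeAt_of_mem hx)).symm)

lemma isCubeUnion_biInter {s : ℤ} {ι : Type*} (t : Finset ι) (f : ι → Set (Fin d → ℝ))
    (h : ∀ i ∈ t, IsCubeUnion s (f i)) : IsCubeUnion s (⋂ i ∈ t, f i) := by
  classical
  induction t using Finset.induction_on with
  | empty => simpa using isCubeUnion_univ
  | @insert a t' hni ih =>
    rw [Finset.set_biInter_insert]
    exact isCubeUnion_inter (h a (Finset.mem_insert_self a t'))
      (ih fun i hi => h i (Finset.mem_insert_of_mem hi))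

end Approx

section Approx2

open scoped symmDiff

variable {d : ℕ} (ν : Measure (Fin d → ℝ)) [IsFiniteMeasure ν]

open DyadicCube

lemma compl_cubeUnion_approx {s : ℤ} {U : Set (Fin d → ℝ)} (hU : IsCubeUnion s U)
    {ε : ℝ≥0∞} (hε : 0 < ε) :
    ∃ V, IsCubeUnion s V ∧ ν (Uᶜ ∆ V) ≤ ε := by
  obtain ⟨T, hTs, rfl⟩ := hU
  rcases T.eq_empty_or_nonempty with rfl | hne
  · refine ⟨Set.univ, isCubeUnion_univ, ?_⟩
    simp
  · obtain ⟨e, rfl⟩ := Set.Countable.exists_eq_range T.to_countable hne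
    have hUeq : (⋃ Q ∈ Set.range e, DyadicCube.toSet Q) = ⋃ i, (e i).toSet :=
      Set.biUnion_range
    rw [hUeq]
    set W : ℕ → Set (Fin d → ℝ) := fun N => ⋃ i ∈ Finset.range N, (e i).toSet with hW
    have hWmeas : ∀ N, MeasurableSet (W N) := fun N =>
      (Finset.range N : Finset ℕ).measurableSet_biUnion fun i _ => (e i).measurableSet_toSet
    have hWsub : ∀ N, W N ⊆ ⋃ i, (e i).toSet := by
      intro N x hx
      obtain ⟨i, -, hxi⟩ := Set.mem_iUnion₂.1 hx
      exact Set.mem_iUnion.2 ⟨i, hxi⟩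
    have hanti : Antitone (fun N => (⋃ i, (e i).toSet) \ W N) := by
      intro a b hab
      refine Set.diff_subset_diff_right ?_
      intro x hx
      obtain ⟨i, hi, hxi⟩ := Set.mem_iUnion₂.1 hx
      exact Set.mem_biUnion (Finset.mem_range.2 (lt_of_lt_of_le (Finset.mem_range.1 hi) hab)) hxi
    have hiInter : (⋂ N, (⋃ i, (e i).toSet) \ W N) = ∅ := by
      ext x
      simp only [Set.mem_iInter, Set.mem_empty_iff_false, iff_false, not_forall]
      by_cases hx : x ∈ ⋃ i, (e i).toSet
      · obtain ⟨i, hxi⟩ := Set.mem_iUnion.1 hx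
        refine ⟨i + 1, fun hcon => hcon.2 ?_⟩
        exact Set.mem_biUnion (Finset.mem_range.2 (Nat.lt_succ_self i)) hxi
      · exact ⟨0, fun hcon => hx hcon.1⟩
    have htends := MeasureTheory.tendsto_measure_iInter_atTop (μ := ν)
      (fun N => ((MeasurableSet.iUnion fun i => (e i).measurableSet_toSet).diff
        (hWmeas N)).nullMeasurableSet)
      hanti ⟨0, (measure_lt_top ν _).ne⟩
    rw [hiInter, measure_empty] at htends
    obtain ⟨N, hN⟩ := (htends.eventually (gt_mem_nhds hε)).exists
    refine ⟨(W N)ᶜ, ?_, ?_⟩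
    · have : (W N)ᶜ = ⋂ i ∈ Finset.range N, (e i).toSetᶜ := by
        rw [hW]
        simp [Set.compl_iUnion]
      rw [this]
      exact isCubeUnion_biInter _ _ fun i _ => isCubeUnion_compl_cube (e i) (hTs _ ⟨i, rfl⟩)
    · rw [compl_symmDiff_compl]
      have hsd : (⋃ i, (e i).toSet) ∆ (W N) = (⋃ i, (e i).toSet) \ W N := by
        rw [Set.symmDiff_def]
        rw [Set.diff_eq_empty.2 (hWsub N)]
        simp
      rw [hsd]
      exact hN.le

lemma isPiSystem_cubes : IsPiSystem {S | ∃ Q : DyadicCube d, S = Q.toSet} := by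
  rintro S ⟨Q, rfl⟩ S' ⟨Q', rfl⟩ hne
  rcases le_total Q.n Q'.n with hle | hle
  · rw [Set.inter_eq_self_of_subset_left (subset_of_inter_nonempty hle hne)]
    exact ⟨Q, rfl⟩
  · obtain ⟨x, hx1, hx2⟩ := hne
    rw [Set.inter_eq_self_of_subset_right (subset_of_inter_nonempty hle ⟨x, hx2, hx1⟩)]
    exact ⟨Q', rfl⟩

lemma measurable_cubeUnion_approx (s : ℤ) :
    ∀ ⦃A : Set (Fin d → ℝ)⦄, MeasurableSet A →
    ∀ ε : ℝ≥0∞, 0 < ε → ∃ U, IsCubeUnion s U ∧ ν (A ∆ U) ≤ ε := by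
  refine MeasurableSpace.induction_on_inter
    (borel_eq_generateFrom_cubes (d := d)) isPiSystem_cubes ?_ ?_ ?_ ?_
  · exact fun ε hε => ⟨∅, isCubeUnion_empty, by simp⟩
  · rintro S ⟨Q, rfl⟩ ε hε
    exact ⟨Q.toSet, isCubeUnion_toSet Q s, by simp⟩
  · rintro t htm iht ε hε
    have hε2 : 0 < ε / 2 := ENNReal.half_pos hε.ne'
    obtain ⟨U, hUcu, hUappr⟩ := iht (ε / 2) hε2
    obtain ⟨V, hVcu, hVappr⟩ := compl_cubeUnion_approx ν hUcu hε2
    refine ⟨V, hVcu, ?_⟩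
    calc ν (tᶜ ∆ V) ≤ ν ((tᶜ ∆ Uᶜ) ∪ (Uᶜ ∆ V)) :=
      measure_mono (symmDiff_triangle _ _ _)
    _ ≤ ν (tᶜ ∆ Uᶜ) + ν (Uᶜ ∆ V) := measure_union_le _ _
    _ ≤ ε / 2 + ε / 2 := by
        rw [compl_symmDiff_compl]
        exact add_le_add hUappr hVappr
    _ = ε := ENNReal.add_halves ε
  · rintro g - - ihg ε hε
    have hpos : ∀ n : ℕ, (0:ℝ≥0∞) < ε / 2 * (2⁻¹ : ℝ≥0∞) ^ n := by
      intro n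
      refine ENNReal.mul_pos (ENNReal.half_pos hε.ne').ne' ?_
      exact (ENNReal.pow_pos (by norm_num) n).ne'
    choose U hUcu hUappr using fun n => ihg n (ε / 2 * (2⁻¹ : ℝ≥0∞) ^ n) (hpos n)
    refine ⟨⋃ n, U n, isCubeUnion_iUnion hUcu, ?_⟩
    have hsub : (⋃ n, g n) ∆ (⋃ n, U n) ⊆ ⋃ n, (g n ∆ U n) := by
      intro x hx
      rw [Set.mem_symmDiff] at hx
      rcases hx with ⟨hx1, hx2⟩ | ⟨hx1, hx2⟩
      · obtain ⟨n, hn⟩ := Set.mem_iUnion.1 hx1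
        refine Set.mem_iUnion.2 ⟨n, ?_⟩
        rw [Set.mem_symmDiff]
        exact Or.inl ⟨hn, fun hc => hx2 (Set.mem_iUnion.2 ⟨n, hc⟩)⟩
      · obtain ⟨n, hn⟩ := Set.mem_iUnion.1 hx1
        refine Set.mem_iUnion.2 ⟨n, ?_⟩
        rw [Set.mem_symmDiff]
        exact Or.inr ⟨hn, fun hc => hx2 (Set.mem_iUnion.2 ⟨n, hc⟩)⟩
    calc ν ((⋃ n, g n) ∆ (⋃ n, U n)) ≤ ∑' n, ν (g n ∆ U n) :=
      le_trans (measure_mono hsub) (measure_iUnion_le _)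
    _ ≤ ∑' n : ℕ, ε / 2 * (2⁻¹ : ℝ≥0∞) ^ n := ENNReal.tsum_le_tsum hUappr
    _ = ε / 2 * ∑' n : ℕ, (2⁻¹ : ℝ≥0∞) ^ n := ENNReal.tsum_mul_left
    _ = ε / 2 * 2 := by
        rw [ENNReal.tsum_geometric]
        norm_num
    _ = ε := by
        rw [ENNReal.div_mul_cancel (by norm_num) (by norm_num)]

end Approx2

section Covering

open DyadicCube
open scoped symmDiff

variable {d : ℕ}

/-- The maximal cubes of a family of cubes with scales bounded by `s`. -/
def maximalCubes (T : Set (DyadicCube d)) : Set (DyadicCube d) :=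
  {Q | Q ∈ T ∧ ∀ Q' ∈ T, Q.toSet ⊆ Q'.toSet → Q' = Q}

lemma exists_maximal_cube (hd : 0 < d) {T : Set (DyadicCube d)} {s : ℤ}
    (hTs : ∀ Q ∈ T, Q.n ≤ s) {Q : DyadicCube d} (hQ : Q ∈ T) :
    ∃ Qmax ∈ maximalCubes T, Q.toSet ⊆ Qmax.toSet := by
  classical
  have main : ∀ t : ℕ, ∀ Q, Q ∈ T → (s - Q.n).toNat ≤ t →
      ∃ Qmax ∈ maximalCubes T, Q.toSet ⊆ Qmax.toSet := by
    intro t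
    induction t with
    | zero =>
      intro Q hQ ht
      by_cases hQmax : ∀ Q' ∈ T, Q.toSet ⊆ Q'.toSet → Q' = Q
      · exact ⟨Q, ⟨hQ, hQmax⟩, subset_refl _⟩
      · exfalso
        push_neg at hQmax
        obtain ⟨Q', hQ'T, hsub, hne⟩ := hQmax
        have hlt : Q.n < Q'.n := by
          rcases le_or_gt Q'.n Q.n with hle | hlt
          · obtain ⟨x, hx⟩ := Q.toSet_nonempty
            exact absurd (toSet_inj hd (le_antisymm
              (subset_of_inter_nonempty hle ⟨x, hsub hx, hx⟩) hsub)) hne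
          · exact hlt
        have h1 := hTs Q hQ
        have h2 := hTs Q' hQ'T
        omega
    | succ t ih =>
      intro Q hQ ht
      by_cases hQmax : ∀ Q' ∈ T, Q.toSet ⊆ Q'.toSet → Q' = Q
      · exact ⟨Q, ⟨hQ, hQmax⟩, subset_refl _⟩
      · push_neg at hQmax
        obtain ⟨Q', hQ'T, hsub, hne⟩ := hQmax
        have hlt : Q.n < Q'.n := by
          rcases le_or_gt Q'.n Q.n with hle | hlt
          · obtain ⟨x, hx⟩ := Q.toSet_nonempty
            exact absurd (toSet_inj hd (le_antisymm
              (subset_of_inter_nonempty hle ⟨x, hsub hx, hx⟩) hsub)) hne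
          · exact hlt
        have h2 := hTs Q' hQ'T
        obtain ⟨Qmax, hQmax, hsub'⟩ := ih Q' hQ'T (by omega)
        exact ⟨Qmax, hQmax, hsub.trans hsub'⟩
  exact main (s - Q.n).toNat Q hQ (le_refl _)

lemma maximalCubes_biUnion {T : Set (DyadicCube d)} {s : ℤ} (hd : 0 < d)
    (hTs : ∀ Q ∈ T, Q.n ≤ s) :
    (⋃ Q ∈ T, Q.toSet) = ⋃ Q ∈ maximalCubes T, Q.toSet := by
  apply Set.Subset.antisymm
  · intro x hx
    obtain ⟨Q, hQ, hxQ⟩ := Set.mem_iUnion₂.1 hx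
    obtain ⟨Qm, hQm, hsub⟩ := exists_maximal_cube hd hTs hQ
    exact Set.mem_biUnion hQm (hsub hxQ)
  · intro x hx
    obtain ⟨Q, hQ, hxQ⟩ := Set.mem_iUnion₂.1 hx
    exact Set.mem_biUnion hQ.1 hxQ

lemma maximalCubes_pairwiseDisjoint (hd : 0 < d) {T : Set (DyadicCube d)} :
    (maximalCubes T).PairwiseDisjoint DyadicCube.toSet := by
  intro Q₁ h₁ Q₂ h₂ hne
  rw [Function.onFun]
  by_contra hcon
  obtain ⟨x, hx1, hx2⟩ := Set.not_disjoint_iff_nonempty_inter.1 hcon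
  rcases le_total Q₁.n Q₂.n with hle | hle
  · exact hne (h₁.2 Q₂ h₂.1 (subset_of_inter_nonempty hle ⟨x, hx1, hx2⟩)).symm
  · exact hne (h₂.2 Q₁ h₁.1 (subset_of_inter_nonempty hle ⟨x, hx2, hx1⟩))

lemma null_of_no_dense_subcube (hd : 0 < d) (μ : Measure (Fin d → ℝ))
    (F : DyadicCube d) (hfin : μ F.toSet < ⊤) {B : Set (Fin d → ℝ)}
    (hB : MeasurableSet B) (hBF : B ⊆ F.toSet)
    (h : ∀ Q : DyadicCube d, Q.n < F.n → Q.toSet ⊆ F.toSet →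
      2 * μ (Q.toSet ∩ B) ≤ μ Q.toSet) :
    μ B = 0 := by
  set ν := μ.restrict F.toSet with hν
  haveI : IsFiniteMeasure ν := by
    constructor
    rw [hν, Measure.restrict_apply_univ]
    exact hfin
  have hνB : ν B = μ B := by
    rw [hν, Measure.restrict_apply hB, Set.inter_eq_self_of_subset_left hBF]
  have hνB_ne : ν B ≠ ⊤ := (measure_lt_top ν B).ne
  have key : ∀ ε : ℝ≥0∞, 0 < ε → ν B ≤ 3 * ε := by
    intro ε hε
    obtain ⟨U, hUcu, hUappr⟩ := measurable_cubeUnion_approx ν (F.n - 1) hB ε hε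
    obtain ⟨T, hTs, rfl⟩ := hUcu
    set U := ⋃ Q ∈ T, DyadicCube.toSet Q with hU
    have hUmeas : MeasurableSet U := MeasurableSet.biUnion T.to_countable
      fun Q _ => Q.measurableSet_toSet
    -- each maximal cube bound
    have hQbound : ∀ Q ∈ maximalCubes T, 2 * ν (B ∩ Q.toSet) ≤ ν Q.toSet := by
      intro Q hQ
      by_cases hsub : (Q.toSet ∩ F.toSet).Nonempty
      · have hQF : Q.toSet ⊆ F.toSet :=
          subset_of_inter_nonempty (by have := hTs Q hQ.1; omega) hsub
        have h1 : ν (B ∩ Q.toSet) = μ (Q.toSet ∩ B) := by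
          rw [hν, Measure.restrict_apply (hB.inter Q.measurableSet_toSet)]
          rw [Set.inter_assoc, Set.inter_eq_self_of_subset_left hQF, Set.inter_comm]
        have h2 : ν Q.toSet = μ Q.toSet := by
          rw [hν, Measure.restrict_apply Q.measurableSet_toSet,
            Set.inter_eq_self_of_subset_left hQF]
        rw [h1, h2]
        exact h Q (by have := hTs Q hQ.1; omega) hQF
      · rw [Set.not_nonempty_iff_eq_empty] at hsub
        have : B ∩ Q.toSet = ∅ := by
          rw [Set.eq_empty_iff_forall_notMem]
          rintro x ⟨hxB, hxQ⟩
          rw [Set.eq_empty_iff_forall_notMem] at hsub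
          exact hsub x ⟨hxQ, hBF hxB⟩
        rw [this]
        simp
    -- main chain
    have hBU : ν B ≤ ν (B ∩ U) + ε := by
      calc ν B ≤ ν (B ∩ U) + ν (B \ U) := by
            rw [← measure_inter_add_diff B hUmeas]
      _ ≤ ν (B ∩ U) + ν (B ∆ U) := by
            refine add_le_add_right (measure_mono ?_) _
            intro x hx
            rw [Set.mem_symmDiff]
            exact Or.inl ⟨hx.1, hx.2⟩
      _ ≤ ν (B ∩ U) + ε := add_le_add_right hUappr _
    have hUB : ν U ≤ ν B + ε := by
      calc ν U ≤ ν (U ∩ B) + ν (U \ B) := by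
            rw [← measure_inter_add_diff U hB]
      _ ≤ ν B + ν (B ∆ U) := by
            refine add_le_add (measure_mono Set.inter_subset_right) (measure_mono ?_)
            intro x hx
            rw [Set.mem_symmDiff]
            exact Or.inr ⟨hx.1, hx.2⟩
      _ ≤ ν B + ε := add_le_add_right hUappr _
    have hmax : 2 * ν (B ∩ U) ≤ ν U := by
      have hcover : B ∩ U ⊆ ⋃ Q ∈ maximalCubes T, (B ∩ Q.toSet) := by
        intro x hx
        have : x ∈ ⋃ Q ∈ maximalCubes T, DyadicCube.toSet Q := by
          rw [← maximalCubes_biUnion hd hTs]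
          exact hx.2
        obtain ⟨Q, hQ, hxQ⟩ := Set.mem_iUnion₂.1 this
        exact Set.mem_biUnion hQ ⟨hx.1, hxQ⟩
      calc 2 * ν (B ∩ U) ≤ 2 * ∑' Q : maximalCubes T, ν (B ∩ (Q : DyadicCube d).toSet) := by
            refine mul_le_mul_right ?_ 2
            exact le_trans (measure_mono hcover)
              (measure_biUnion_le ν (maximalCubes T).to_countable _)
      _ = ∑' Q : maximalCubes T, 2 * ν (B ∩ (Q : DyadicCube d).toSet) :=
            ENNReal.tsum_mul_left.symm
      _ ≤ ∑' Q : maximalCubes T, ν (Q : DyadicCube d).toSet :=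
            ENNReal.tsum_le_tsum fun Q => hQbound Q Q.2
      _ = ν (⋃ Q ∈ maximalCubes T, DyadicCube.toSet Q) :=
            (measure_biUnion (maximalCubes T).to_countable
              (maximalCubes_pairwiseDisjoint hd)
              (fun Q _ => Q.measurableSet_toSet)).symm
      _ = ν U := by rw [← maximalCubes_biUnion hd hTs]
    -- combine
    have : ν B + ν B ≤ ν B + 3 * ε := by
      calc ν B + ν B = 2 * ν B := (two_mul _).symm
      _ ≤ 2 * (ν (B ∩ U) + ε) := mul_le_mul_right hBU 2
      _ = 2 * ν (B ∩ U) + 2 * ε := by ring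
      _ ≤ ν U + 2 * ε := add_le_add_left hmax _
      _ ≤ (ν B + ε) + 2 * ε := add_le_add_left hUB _
      _ = ν B + 3 * ε := by ring
    exact (ENNReal.add_le_add_iff_left hνB_ne).1 this
  -- conclude
  rw [← hνB]
  by_contra h0
  have hpos : 0 < ν B := pos_iff_ne_zero.2 h0
  have h4 : (0:ℝ≥0∞) < ν B / 4 := ENNReal.div_pos h0 (by norm_num)
  have hle := key (ν B / 4) h4
  have : (ν B).toReal ≤ 3 * ((ν B).toReal / 4) := by
    have h3 : ((3:ℝ≥0∞) * (ν B / 4)).toReal = 3 * ((ν B).toReal / 4) := by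
      rw [ENNReal.toReal_mul, ENNReal.toReal_div]
      norm_num
    rw [← h3]
    refine ENNReal.toReal_mono ?_ hle
    refine ENNReal.mul_ne_top (by norm_num) ?_
    exact (ENNReal.div_lt_top hνB_ne (by norm_num)).ne
  have hBpos : 0 < (ν B).toReal := ENNReal.toReal_pos h0 hνB_ne
  linarith

end Covering

/-! ### The stopping-time construction -/

section Stopping

open DyadicCube

variable {d : ℕ} (μ : Measure (Fin d → ℝ)) (lam : ℝ) (f : (Fin d → ℝ) → ℝ)
  (med : DyadicCube d → ℝ)

/-- The stopping radius of a cube. -/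
def rQ (F : DyadicCube d) : ℝ := rOsc μ lam (fun x => f x - med F) F.toSet

/-- The bad set of a cube. -/
def Ebad (F : DyadicCube d) : Set (Fin d → ℝ) :=
  F.toSet ∩ {x | rQ μ lam f med F < |f x - med F|}

/-- A cube `Q` is a good stopping candidate inside `F`. -/
def good (F Q : DyadicCube d) : Prop :=
  Q.toSet ⊂ F.toSet ∧ μ Q.toSet ≤ 2 * μ (Q.toSet ∩ Ebad μ lam f med F)

/-- The stopping children of `F`: maximal good cubes. -/
def ch (F : DyadicCube d) : Set (DyadicCube d) :=
  maximalCubes {Q | good μ lam f med F Q}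

/-- Generations of stopping cubes. -/
def gen (F₀ : DyadicCube d) : ℕ → Set (DyadicCube d)
  | 0 => {F₀}
  | (k+1) => {G | ∃ F ∈ gen F₀ k, G ∈ ch μ lam f med F}

/-- The full stopping family. -/
def famF (F₀ : DyadicCube d) : Set (DyadicCube d) := ⋃ k, gen μ lam f med F₀ k

variable {μ lam f med}

lemma measurableSet_Ebad (hf : Measurable f) (F : DyadicCube d) : MeasurableSet (Ebad μ lam f med F) :=
  F.measurableSet_toSet.inter (((hf.sub measurable_const).abs) measurableSet_Ioi)

lemma Ebad_subset (F : DyadicCube d) : Ebad μ lam f med F ⊆ F.toSet :=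
  Set.inter_subset_left

lemma measure_Ebad_le (hf : Measurable f) (hlam0 : 0 < lam) (F : DyadicCube d) (hfin : μ F.toSet < ⊤) :
    μ (Ebad μ lam f med F) ≤ ENNReal.ofReal lam * μ F.toSet :=
  measure_rOsc_lt_le hlam0 F.measurableSet_toSet (hf.sub measurable_const) hfin

lemma notin_Ebad {F : DyadicCube d} {x : Fin d → ℝ} (hx : x ∈ F.toSet)
    (hnx : x ∉ Ebad μ lam f med F) : |f x - med F| ≤ rQ μ lam f med F := by
  by_contra hcon
  push_neg at hcon
  exact hnx ⟨hx, hcon⟩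

lemma good_scale (hd : 0 < d) {F Q : DyadicCube d} (h : good μ lam f med F Q) : Q.n < F.n :=
  scale_lt_of_ssubset hd h.1

lemma ch_subset_good (F : DyadicCube d) {Q : DyadicCube d}
    (h : Q ∈ ch μ lam f med F) : good μ lam f med F Q := h.1

lemma exists_child_of_good (hd : 0 < d) {F Q : DyadicCube d} (h : good μ lam f med F Q) :
    ∃ Q' ∈ ch μ lam f med F, Q.toSet ⊆ Q'.toSet :=
  exists_maximal_cube hd (s := F.n - 1)
    (fun Q' hQ' => by have := good_scale hd hQ'; omega) h

lemma ch_pairwiseDisjoint (hd : 0 < d) (F : DyadicCube d) :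
    (ch μ lam f med F).PairwiseDisjoint DyadicCube.toSet :=
  maximalCubes_pairwiseDisjoint hd

lemma ch_tsum_le (hd : 0 < d) (hf : Measurable f) (hlam0 : 0 < lam) (F : DyadicCube d) (hfin : μ F.toSet < ⊤) :
    ∑' Q : ch μ lam f med F, μ (Q : DyadicCube d).toSet ≤
      ENNReal.ofReal (2 * lam) * μ F.toSet := by
  have h2lam : ENNReal.ofReal (2 * lam) = 2 * ENNReal.ofReal lam := by
    rw [ENNReal.ofReal_mul (by norm_num : (0:ℝ) ≤ 2)]
    norm_num
  calc ∑' Q : ch μ lam f med F, μ (Q : DyadicCube d).toSet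
      ≤ ∑' Q : ch μ lam f med F,
        2 * μ ((Q : DyadicCube d).toSet ∩ Ebad μ lam f med F) :=
        ENNReal.tsum_le_tsum fun Q => Q.2.1.2
  _ = 2 * ∑' Q : ch μ lam f med F,
        μ ((Q : DyadicCube d).toSet ∩ Ebad μ lam f med F) := ENNReal.tsum_mul_left
  _ = 2 * μ (⋃ Q ∈ ch μ lam f med F, (DyadicCube.toSet Q ∩ Ebad μ lam f med F)) := by
        have hmb := measure_biUnion (μ := μ) (s := ch μ lam f med F)
          (f := fun Q => DyadicCube.toSet Q ∩ Ebad μ lam f med F)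
          (ch μ lam f med F).to_countable
          (fun Q₁ h₁ Q₂ h₂ hne => Disjoint.mono Set.inter_subset_left Set.inter_subset_left
            (ch_pairwiseDisjoint hd F h₁ h₂ hne))
          (fun Q _ => (DyadicCube.measurableSet_toSet Q).inter (measurableSet_Ebad hf F))
        rw [hmb]
  _ ≤ 2 * μ (Ebad μ lam f med F) := by
        refine mul_le_mul_right (measure_mono ?_) 2
        exact Set.iUnion₂_subset fun Q _ => Set.inter_subset_right
  _ ≤ 2 * (ENNReal.ofReal lam * μ F.toSet) :=
        mul_le_mul_right (measure_Ebad_le hf hlam0 F hfin) 2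
  _ = ENNReal.ofReal (2 * lam) * μ F.toSet := by rw [h2lam, mul_assoc]

variable (F₀ : DyadicCube d)

lemma gen_subset_F₀ : ∀ k, ∀ F ∈ gen μ lam f med F₀ k, F.toSet ⊆ F₀.toSet := by
  intro k
  induction k with
  | zero => rintro F rfl; exact subset_refl _
  | succ k ih =>
    rintro G ⟨F, hF, hG⟩
    exact (hG.1.1.subset).trans (ih F hF)

lemma famF_subset_F₀ {F : DyadicCube d} (hF : F ∈ famF μ lam f med F₀) :
    F.toSet ⊆ F₀.toSet := by
  obtain ⟨k, hk⟩ := Set.mem_iUnion.1 hF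
  exact gen_subset_F₀ F₀ k F hk

lemma famF_cases {G : DyadicCube d} (hG : G ∈ famF μ lam f med F₀) :
    G = F₀ ∨ ∃ G₁ ∈ famF μ lam f med F₀, G ∈ ch μ lam f med G₁ := by
  obtain ⟨k, hk⟩ := Set.mem_iUnion.1 hG
  cases k with
  | zero => exact Or.inl hk
  | succ k =>
    obtain ⟨G₁, hG₁, hch⟩ := hk
    exact Or.inr ⟨G₁, Set.mem_iUnion.2 ⟨k, hG₁⟩, hch⟩

lemma famF_scale_le (hd : 0 < d) {F : DyadicCube d} (hF : F ∈ famF μ lam f med F₀) : F.n ≤ F₀.n :=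
  scale_le_of_subset hd (famF_subset_F₀ F₀ hF)

lemma gen_pairwiseDisjoint (hd : 0 < d) : ∀ k, (gen μ lam f med F₀ k).PairwiseDisjoint
    DyadicCube.toSet := by
  intro k
  induction k with
  | zero =>
    rintro F₁ rfl F₂ rfl hne
    exact absurd rfl hne
  | succ k ih =>
    rintro G₁ ⟨F₁, hF₁, hG₁⟩ G₂ ⟨F₂, hF₂, hG₂⟩ hne
    rcases eq_or_ne F₁ F₂ with rfl | hFne
    · exact ch_pairwiseDisjoint hd F₁ hG₁ hG₂ hne
    · have hdisj := ih hF₁ hF₂ hFne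
      exact Set.disjoint_of_subset hG₁.1.1.subset hG₂.1.1.subset hdisj

lemma gen_biUnion_measure_le (hd : 0 < d) (hf : Measurable f) (hlam0 : 0 < lam) (hfin : μ F₀.toSet < ⊤) :
    ∀ k, μ (⋃ F ∈ gen μ lam f med F₀ k, DyadicCube.toSet F) ≤
      (ENNReal.ofReal (2 * lam))^k * μ F₀.toSet := by
  intro k
  induction k with
  | zero =>
    rw [show gen μ lam f med F₀ 0 = {F₀} from rfl]
    simp
  | succ k ih =>
    have hsub : (⋃ F ∈ gen μ lam f med F₀ (k+1), DyadicCube.toSet F) ⊆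
        ⋃ F ∈ gen μ lam f med F₀ k, (⋃ Q ∈ ch μ lam f med F, DyadicCube.toSet Q) := by
      intro x hx
      obtain ⟨G, ⟨F, hF, hG⟩, hxG⟩ := Set.mem_iUnion₂.1 hx
      exact Set.mem_biUnion hF (Set.mem_biUnion hG hxG)
    calc μ (⋃ F ∈ gen μ lam f med F₀ (k+1), DyadicCube.toSet F)
        ≤ ∑' F : gen μ lam f med F₀ k,
          μ (⋃ Q ∈ ch μ lam f med (F : DyadicCube d), DyadicCube.toSet Q) :=
          le_trans (measure_mono hsub)
            (measure_biUnion_le μ (gen μ lam f med F₀ k).to_countable _)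
    _ ≤ ∑' F : gen μ lam f med F₀ k,
          ENNReal.ofReal (2 * lam) * μ (F : DyadicCube d).toSet := by
          refine ENNReal.tsum_le_tsum fun F => ?_
          refine le_trans (measure_biUnion_le μ (ch μ lam f med _).to_countable _) ?_
          refine ch_tsum_le hd hf hlam0 _ ?_
          exact lt_of_le_of_lt (measure_mono
            (famF_subset_F₀ F₀ (Set.mem_iUnion.2 ⟨k, F.2⟩))) hfin
    _ = ENNReal.ofReal (2 * lam) * ∑' F : gen μ lam f med F₀ k,
          μ (F : DyadicCube d).toSet := ENNReal.tsum_mul_left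
    _ = ENNReal.ofReal (2 * lam) *
          μ (⋃ F ∈ gen μ lam f med F₀ k, DyadicCube.toSet F) := by
          rw [measure_biUnion (gen μ lam f med F₀ k).to_countable
            (gen_pairwiseDisjoint F₀ hd k) (fun Q _ => Q.measurableSet_toSet)]
    _ ≤ ENNReal.ofReal (2 * lam) * ((ENNReal.ofReal (2 * lam))^k * μ F₀.toSet) :=
          mul_le_mul_right ih _
    _ = (ENNReal.ofReal (2 * lam))^(k+1) * μ F₀.toSet := by ring

end Stopping

section Structure

open DyadicCube

variable {d : ℕ} {μ : Measure (Fin d → ℝ)} {lam : ℝ} {f : (Fin d → ℝ) → ℝ}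
  {med : DyadicCube d → ℝ} (F₀ : DyadicCube d)

lemma famF_child_mem {F Q : DyadicCube d} (hF : F ∈ famF μ lam f med F₀)
    (hQ : Q ∈ ch μ lam f med F) : Q ∈ famF μ lam f med F₀ := by
  obtain ⟨k, hk⟩ := Set.mem_iUnion.1 hF
  exact Set.mem_iUnion.2 ⟨k + 1, ⟨F, hk, hQ⟩⟩

lemma mem_child_or_eq (hd : 0 < d) :
    ∀ N : ℕ, ∀ G F : DyadicCube d, G ∈ famF μ lam f med F₀ → F ∈ famF μ lam f med F₀ →
      (F₀.n - G.n).toNat + (F₀.n - F.n).toNat ≤ N → G.toSet ⊆ F.toSet →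
      G = F ∨ ∃ Q ∈ ch μ lam f med F, G.toSet ⊆ Q.toSet := by
  intro N
  induction N using Nat.strong_induction_on with
  | _ N ih =>
    intro G F hG hF hN hsub
    rcases famF_cases F₀ hG with rfl | ⟨G₁, hG₁, hch⟩
    · left
      exact (toSet_inj hd (le_antisymm (famF_subset_F₀ G hF) hsub)).symm
    · have hGG₁ : G.toSet ⊂ G₁.toSet := hch.1.1
      have hGn : G.n < G₁.n := scale_lt_of_ssubset hd hGG₁
      have hG₁n : G₁.n ≤ F₀.n := famF_scale_le F₀ hd hG₁
      have hGn' : G.n ≤ F₀.n := famF_scale_le F₀ hd hG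
      have hFn : F.n ≤ F₀.n := famF_scale_le F₀ hd hF
      obtain ⟨y, hy⟩ := G.toSet_nonempty
      rcases le_total G₁.n F.n with hle | hle
      · have hsub1 : G₁.toSet ⊆ F.toSet :=
          subset_of_inter_nonempty hle ⟨y, hGG₁.subset hy, hsub hy⟩
        rcases eq_or_ne G₁ F with rfl | hne2
        · exact Or.inr ⟨G, hch, subset_refl _⟩
        · have hmeas : (F₀.n - G₁.n).toNat + (F₀.n - F.n).toNat < N := by omega
          rcases ih _ hmeas G₁ F hG₁ hF (le_refl _) hsub1 with rfl | ⟨Q, hQ, hQsub⟩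
          · exact absurd rfl hne2
          · exact Or.inr ⟨Q, hQ, hGG₁.subset.trans hQsub⟩
      · have hsub1 : F.toSet ⊆ G₁.toSet :=
          subset_of_inter_nonempty hle ⟨y, hsub hy, hGG₁.subset hy⟩
        rcases eq_or_ne F G₁ with rfl | hne2
        · exact Or.inr ⟨G, hch, subset_refl _⟩
        · have hmeas : (F₀.n - F.n).toNat + (F₀.n - G₁.n).toNat < N := by omega
          rcases ih _ hmeas F G₁ hF hG₁ (le_refl _) hsub1 with heq | ⟨Q, hQ, hQsub⟩
          · exact absurd heq hne2
          · have hQG : Q = G := hch.2 Q hQ.1 (hsub.trans hQsub)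
            left
            exact toSet_inj hd (le_antisymm hsub (hQG ▸ hQsub))

lemma child_jump (hd : 0 < d) (hf : Measurable f) (hlam0 : 0 < lam)
    (hmed : ∀ Q : DyadicCube d, 0 < μ Q.toSet → IsMedian μ f Q.toSet (med Q))
    {F Q : DyadicCube d} (hQ : Q ∈ ch μ lam f med F) (hFfin : μ F.toSet < ⊤) :
    |med Q - med F| ≤ |med Q - med Q.parent| + rQ μ lam f med F := by
  have hrQ : 0 ≤ rQ μ lam f med F := rOsc_nonneg
  have hQss : Q.toSet ⊂ F.toSet := hQ.1.1
  have hQn : Q.n < F.n := scale_lt_of_ssubset hd hQss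
  have hQP : Q.toSet ⊆ Q.parent.toSet := subset_parent Q
  obtain ⟨y, hy⟩ := Q.toSet_nonempty
  have hPF : Q.parent.toSet ⊆ F.toSet := by
    refine subset_of_inter_nonempty (by rw [parent_n]; omega) ⟨y, hQP hy, hQss.subset hy⟩
  rcases eq_or_ne Q.parent F with heq | hne
  · rw [heq]
    linarith
  · have hPss : Q.parent.toSet ⊂ F.toSet := by
      refine ⟨hPF, fun hcon => hne (toSet_inj hd (le_antisymm hPF hcon))⟩
    have hPneQ : Q.parent ≠ Q := by
      intro hcon
      have := parent_n Q
      rw [hcon] at this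
      omega
    have hnotgood : ¬ good μ lam f med F Q.parent := by
      intro hgood
      exact hPneQ (hQ.2 Q.parent hgood hQP)
    have hstrict : 2 * μ (Q.parent.toSet ∩ Ebad μ lam f med F) < μ Q.parent.toSet := by
      by_contra hcon
      push_neg at hcon
      exact hnotgood ⟨hPss, hcon⟩
    have hPpos : 0 < μ Q.parent.toSet := by
      by_contra hcon
      push_neg at hcon
      have h0 : μ Q.parent.toSet = 0 := le_antisymm hcon (zero_le)
      rw [h0] at hstrict
      exact absurd hstrict (by simp)
    have hPfin : μ Q.parent.toSet < ⊤ := lt_of_le_of_lt (measure_mono hPF) hFfin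
    have hinter : Q.parent.toSet ∩ Ebad μ lam f med F =
        Q.parent.toSet ∩ {x | rQ μ lam f med F < |f x - med F|} := by
      rw [Ebad, ← Set.inter_assoc, Set.inter_eq_self_of_subset_left hPF]
    have hmedP : |med Q.parent - med F| ≤ rQ μ lam f med F := by
      refine abs_median_sub_le hPfin (hmed Q.parent hPpos) ?_
      rw [← hinter]
      exact hstrict
    calc |med Q - med F| ≤ |med Q - med Q.parent| + |med Q.parent - med F| :=
      abs_sub_le _ _ _
    _ ≤ |med Q - med Q.parent| + rQ μ lam f med F := by linarith

lemma Ebad_diff_children_null (hd : 0 < d) (hf : Measurable f)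
    {F : DyadicCube d} (hFfin : μ F.toSet < ⊤) :
    μ (Ebad μ lam f med F \ ⋃ Q ∈ ch μ lam f med F, DyadicCube.toSet Q) = 0 := by
  set B := Ebad μ lam f med F \ ⋃ Q ∈ ch μ lam f med F, DyadicCube.toSet Q with hB
  have hBmeas : MeasurableSet B :=
    (measurableSet_Ebad hf F).diff (MeasurableSet.biUnion
      (ch μ lam f med F).to_countable fun Q _ => Q.measurableSet_toSet)
  refine null_of_no_dense_subcube hd μ F hFfin hBmeas
    ((Set.diff_subset).trans (Ebad_subset F)) ?_
  intro Q hQn hQF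
  by_cases hgood : good μ lam f med F Q
  · obtain ⟨Q', hQ', hsub⟩ := exists_child_of_good hd hgood
    have hempty : Q.toSet ∩ B = ∅ := by
      rw [Set.eq_empty_iff_forall_notMem]
      rintro x ⟨hxQ, hxB⟩
      exact hxB.2 (Set.mem_biUnion hQ' (hsub hxQ))
    rw [hempty]
    simp
  · have hss : Q.toSet ⊂ F.toSet := by
      refine ⟨hQF, fun hcon => ?_⟩
      have := scale_le_of_subset hd hcon
      omega
    have : ¬ (μ Q.toSet ≤ 2 * μ (Q.toSet ∩ Ebad μ lam f med F)) := by
      intro hcon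
      exact hgood ⟨hss, hcon⟩
    push_neg at this
    refine le_trans ?_ this.le
    refine mul_le_mul_right (measure_mono ?_) 2
    exact Set.inter_subset_inter_right _ (Set.diff_subset)

lemma gen_union_antitone {j k : ℕ} (hjk : j ≤ k) :
    (⋃ F ∈ gen μ lam f med F₀ k, DyadicCube.toSet F) ⊆
      ⋃ F ∈ gen μ lam f med F₀ j, DyadicCube.toSet F := by
  induction k with
  | zero =>
    have : j = 0 := Nat.le_zero.1 hjk
    subst this
    exact subset_refl _
  | succ k ih =>
    rcases Nat.lt_or_ge j (k+1) with hlt | hge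
    · refine Set.Subset.trans ?_ (ih (by omega))
      intro x hx
      obtain ⟨G, ⟨F, hF, hG⟩, hxG⟩ := Set.mem_iUnion₂.1 hx
      exact Set.mem_biUnion hF (hG.1.1.subset hxG)
    · have : j = k + 1 := by omega
      subst this
      exact subset_refl _

end Structure

section Chain

open DyadicCube

variable {d : ℕ} {μ : Measure (Fin d → ℝ)} {lam : ℝ} {f : (Fin d → ℝ) → ℝ}
  {med : DyadicCube d → ℝ} (F₀ : DyadicCube d)

lemma chain_bound (hd : 0 < d) (hf : Measurable f) (hlam0 : 0 < lam)
    (hmed : ∀ Q : DyadicCube d, 0 < μ Q.toSet → IsMedian μ f Q.toSet (med Q))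
    (hfin : μ F₀.toSet < ⊤) {x : Fin d → ℝ} {K : ℕ}
    (hgen : x ∉ ⋃ F ∈ gen μ lam f med F₀ (K+1), DyadicCube.toSet F)
    (hnb : ∀ F ∈ famF μ lam f med F₀,
      x ∉ Ebad μ lam f med F \ ⋃ Q ∈ ch μ lam f med F, DyadicCube.toSet Q) :
    ∀ u j F, F ∈ gen μ lam f med F₀ j → x ∈ F.toSet → K + 1 ≤ j + u →
      ∃ S : Finset (DyadicCube d), (↑S : Set (DyadicCube d)) ⊆ famF μ lam f med F₀ ∧
        F ∈ S ∧ (∀ G ∈ S, x ∈ G.toSet ∧ G.toSet ⊆ F.toSet) ∧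
        |f x - med F| ≤ rQ μ lam f med F +
          ∑ G ∈ S.erase F, (rQ μ lam f med G + |med G - med G.parent|) := by
  classical
  intro u
  induction u with
  | zero =>
    intro j F hFj hxF hK
    exfalso
    refine hgen (gen_union_antitone F₀ (j := K+1) (k := j) (by omega) ?_)
    exact Set.mem_biUnion hFj hxF
  | succ u ih =>
    intro j F hFj hxF hK
    have hFfam : F ∈ famF μ lam f med F₀ := Set.mem_iUnion.2 ⟨j, hFj⟩
    have hFfin' : μ F.toSet < ⊤ :=
      lt_of_le_of_lt (measure_mono (famF_subset_F₀ F₀ hFfam)) hfin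
    by_cases hex : ∃ M ∈ famF μ lam f med F₀, x ∈ M.toSet ∧ M.toSet ⊂ F.toSet
    · obtain ⟨G', hG'fam, hxG', hG'ss⟩ := hex
      have hG'cube : G' = cubeAt G'.n x := eq_cubeAt_of_mem hxG'
      set J : Finset ℤ := (Finset.Icc G'.n F.n).filter
        (fun i => cubeAt i x ∈ famF μ lam f med F₀ ∧ (cubeAt i x).toSet ⊂ F.toSet)
        with hJdef
      have hG'J : G'.n ∈ J := by
        refine Finset.mem_filter.2 ⟨Finset.mem_Icc.2
          ⟨le_refl _, (scale_lt_of_ssubset hd hG'ss).le⟩, ?_⟩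
        rw [← hG'cube]
        exact ⟨hG'fam, hG'ss⟩
      have hJne : J.Nonempty := ⟨G'.n, hG'J⟩
      set jm := J.max' hJne with hjmdef
      have hjmJ : jm ∈ J := J.max'_mem hJne
      have hjm := Finset.mem_filter.1 hjmJ
      have hGfam : cubeAt jm x ∈ famF μ lam f med F₀ := hjm.2.1
      have hGss : (cubeAt jm x).toSet ⊂ F.toSet := hjm.2.2
      set G := cubeAt jm x with hGdef
      have hxG : x ∈ G.toSet := mem_cubeAt jm x
      have hmax : ∀ M, M ∈ famF μ lam f med F₀ → x ∈ M.toSet → M.toSet ⊂ F.toSet →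
          M.toSet ⊆ G.toSet := by
        intro M hMfam hxM hMss
        have hMcube : M = cubeAt M.n x := eq_cubeAt_of_mem hxM
        rcases le_or_gt M.n jm with hle | hlt
        · rw [hMcube]
          exact cubeAt_subset_cubeAt hle
        · exfalso
          have hlow : G'.n ≤ M.n := by
            have := Finset.le_max' J G'.n hG'J
            omega
          have hMJ : M.n ∈ J := by
            refine Finset.mem_filter.2 ⟨Finset.mem_Icc.2
              ⟨hlow, (scale_lt_of_ssubset hd hMss).le⟩, ?_⟩
            rw [← hMcube]
            exact ⟨hMfam, hMss⟩
          exact absurd (Finset.le_max' J M.n hMJ) (not_le.2 hlt)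
      have hGch : G ∈ ch μ lam f med F := by
        rcases mem_child_or_eq F₀ hd ((F₀.n - G.n).toNat + (F₀.n - F.n).toNat)
          G F hGfam hFfam (le_refl _) hGss.subset with heq | ⟨Q, hQ, hQsub⟩
        · exact absurd heq (fun h => hGss.ne (by rw [h]))
        · have hQfam : Q ∈ famF μ lam f med F₀ := famF_child_mem F₀ hFfam hQ
          have hQsubG : Q.toSet ⊆ G.toSet := hmax Q hQfam (hQsub hxG) hQ.1.1
          have heqset : Q.toSet = G.toSet := le_antisymm hQsubG hQsub
          exact (toSet_inj hd heqset) ▸ hQ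
      have hGgen : G ∈ gen μ lam f med F₀ (j+1) := ⟨F, hFj, hGch⟩
      obtain ⟨S, hSfam, hGS, hSmem, hSbound⟩ := ih (j+1) G hGgen hxG (by omega)
      have hFS : F ∉ S := by
        intro hcon
        exact ssubset_irrefl F.toSet (lt_of_le_of_lt (hSmem F hcon).2 hGss)
      refine ⟨insert F S, ?_, Finset.mem_insert_self F S, ?_, ?_⟩
      · intro M hM
        rw [Finset.coe_insert] at hM
        rcases hM with rfl | hM
        · exact hFfam
        · exact hSfam hM
      · intro G'' hG''
        rcases Finset.mem_insert.1 hG'' with rfl | hmem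
        · exact ⟨hxF, subset_refl _⟩
        · exact ⟨(hSmem G'' hmem).1, ((hSmem G'' hmem).2).trans hGss.subset⟩
      · have hjump := child_jump hd hf hlam0 hmed hGch hFfin'
        have htri : |f x - med F| ≤ |f x - med G| + |med G - med F| := abs_sub_le _ _ _
        have herase : (insert F S).erase F = S := Finset.erase_insert hFS
        rw [herase]
        have hsplit : ∑ G'' ∈ S, (rQ μ lam f med G'' + |med G'' - med G''.parent|) =
            (rQ μ lam f med G + |med G - med G.parent|) +
            ∑ G'' ∈ S.erase G, (rQ μ lam f med G'' + |med G'' - med G''.parent|) :=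
          (Finset.add_sum_erase S _ hGS).symm
        rw [hsplit]
        linarith
    · push_neg at hex
      have hnE : x ∉ Ebad μ lam f med F := by
        intro hxE
        have hxch : x ∈ ⋃ Q ∈ ch μ lam f med F, DyadicCube.toSet Q := by
          by_contra hcon
          exact hnb F hFfam ⟨hxE, hcon⟩
        obtain ⟨Q, hQ, hxQ⟩ := Set.mem_iUnion₂.1 hxch
        exact hex Q (famF_child_mem F₀ hFfam hQ) hxQ hQ.1.1
      refine ⟨{F}, ?_, Finset.mem_singleton_self F, ?_, ?_⟩
      · intro M hM
        rw [Finset.coe_singleton] at hM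
        rw [hM]
        exact hFfam
      · intro G hG
        rw [Finset.mem_singleton.1 hG]
        exact ⟨hxF, subset_refl _⟩
      · rw [Finset.erase_singleton]
        simpa using notin_Ebad hxF hnE

end Chain


/-- median oscillation decomposition for general measures, adapted to the
dyadic martingale BMO. -/
theorem median_oscillation_decomposition (lam : ℝ) (hlam0 : 0 < lam)
    (hlam1 : lam < 1 / 2) :
    ∃ C : ℝ, 0 < C ∧
      ∀ (d : ℕ) (μ : Measure (Fin d → ℝ)), IsLocallyFiniteMeasure μ →
      ∀ (f : (Fin d → ℝ) → ℝ), Measurable f →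
      ∀ (med : DyadicCube d → ℝ),
        (∀ Q : DyadicCube d, 0 < μ Q.toSet → IsMedian μ f Q.toSet (med Q)) →
      ∀ (F₀ : DyadicCube d), 0 < μ F₀.toSet → μ F₀.toSet < ⊤ →
        ∃ 𝓕 : Set (DyadicCube d),
          F₀ ∈ 𝓕 ∧ (∀ F ∈ 𝓕, F.toSet ⊆ F₀.toSet) ∧
          (∀ F ∈ 𝓕, ∑' F' : sparseChildren 𝓕 F, μ (F' : DyadicCube d).toSet ≤
            ENNReal.ofReal (2 * lam) * μ F.toSet) ∧
          ∀ᵐ x ∂μ, x ∈ F₀.toSet →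
            ENNReal.ofReal |f x - med F₀.parent| ≤
              ENNReal.ofReal C *
                ∑' F : 𝓕, (F : DyadicCube d).toSet.indicator
                  (fun _ => ENNReal.ofReal
                    (mOsc μ lam f (F : DyadicCube d).toSet +
                      |med (F : DyadicCube d) - med (F : DyadicCube d).parent|)) x := by
  refine ⟨2, by norm_num, ?_⟩
  intro d μ hloc f hf med hmed F₀ hF₀pos hF₀fin
  rcases Nat.eq_zero_or_pos d with hd0 | hd
  · -- dimension zero: the underlying space is a single point
    subst hd0
    refine ⟨{F₀}, rfl, ?_, ?_, ?_⟩
    · intro F hF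
      rw [Set.mem_singleton_iff] at hF
      rw [hF]
    · intro F hF
      rw [Set.mem_singleton_iff] at hF
      rw [hF]
      have hempty : sparseChildren {F₀} F₀ = (∅ : Set (DyadicCube 0)) := by
        rw [Set.eq_empty_iff_forall_notMem]
        rintro F' ⟨hF'mem, hss, -⟩
        rw [Set.mem_singleton_iff] at hF'mem
        subst hF'mem
        exact ssubset_irrefl _ hss
      rw [hempty]
      simp
    · have hE : Ebad μ lam f med F₀ = ∅ := by
        by_contra hne
        obtain ⟨y, hy⟩ := Set.nonempty_iff_ne_empty.2 hne
        have hEuniv : F₀.toSet ⊆ Ebad μ lam f med F₀ := by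
          intro z hz
          have : z = y := Subsingleton.elim z y
          rw [this]
          exact hy
        have h1 : μ F₀.toSet ≤ ENNReal.ofReal lam * μ F₀.toSet :=
          le_trans (measure_mono hEuniv) (measure_Ebad_le hf hlam0 F₀ hF₀fin)
        have h2 : ENNReal.ofReal lam * μ F₀.toSet < 1 * μ F₀.toSet := by
          rw [ENNReal.mul_lt_mul_iff_left hF₀pos.ne' hF₀fin.ne, ENNReal.ofReal_lt_one]
          linarith
        rw [one_mul] at h2
        exact absurd (lt_of_le_of_lt h1 h2) (lt_irrefl _)
      refine Filter.Eventually.of_forall ?_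
      intro x hx
      have hxE : x ∉ Ebad μ lam f med F₀ := by
        rw [hE]
        exact Set.notMem_empty x
      have h1 : |f x - med F₀| ≤ rQ μ lam f med F₀ := notin_Ebad hx hxE
      have h2 : rQ μ lam f med F₀ ≤ 2 * mOsc μ lam f F₀.toSet :=
        rOsc_med_le_two_mOsc hlam0 hlam1 F₀.measurableSet_toSet hf hF₀pos hF₀fin
          (hmed F₀ hF₀pos)
      have hreal : |f x - med F₀.parent| ≤
          2 * (mOsc μ lam f F₀.toSet + |med F₀ - med F₀.parent|) := by
        have h3 := abs_sub_le (f x) (med F₀) (med F₀.parent)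
        have h4 : 0 ≤ |med F₀ - med F₀.parent| := abs_nonneg _
        linarith
      have hts : (∑' F : ({F₀} : Set (DyadicCube 0)),
          (F : DyadicCube 0).toSet.indicator
            (fun _ => ENNReal.ofReal (mOsc μ lam f (F : DyadicCube 0).toSet +
              |med (F : DyadicCube 0) - med (F : DyadicCube 0).parent|)) x) =
          ENNReal.ofReal (mOsc μ lam f F₀.toSet + |med F₀ - med F₀.parent|) := by
        rw [tsum_singleton F₀ (fun F => F.toSet.indicator
          (fun _ => ENNReal.ofReal (mOsc μ lam f F.toSet + |med F - med F.parent|)) x)]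
        rw [Set.indicator_of_mem hx]
      rw [hts]
      calc ENNReal.ofReal |f x - med F₀.parent|
          ≤ ENNReal.ofReal (2 * (mOsc μ lam f F₀.toSet + |med F₀ - med F₀.parent|)) :=
            ENNReal.ofReal_le_ofReal hreal
      _ = ENNReal.ofReal 2 *
            ENNReal.ofReal (mOsc μ lam f F₀.toSet + |med F₀ - med F₀.parent|) :=
            ENNReal.ofReal_mul (by norm_num)
  · -- positive dimension
    refine ⟨famF μ lam f med F₀, Set.mem_iUnion.2 ⟨0, rfl⟩,
      fun F hF => famF_subset_F₀ F₀ hF, ?_, ?_⟩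
    · intro F hF
      have hsub : sparseChildren (famF μ lam f med F₀) F ⊆ ch μ lam f med F := by
        rintro F' ⟨hF'fam, hss, hmax⟩
        rcases mem_child_or_eq F₀ hd ((F₀.n - F'.n).toNat + (F₀.n - F.n).toNat)
          F' F hF'fam hF (le_refl _) hss.subset with heq | ⟨Q, hQ, hsubQ⟩
        · exact absurd (heq ▸ hss) (ssubset_irrefl _)
        · have hQfam : Q ∈ famF μ lam f med F₀ := famF_child_mem F₀ hF hQ
          have hQF' := hmax Q hQfam hQ.1.1 hsubQ
          exact hQF' ▸ hQ
      have hdisj : (sparseChildren (famF μ lam f med F₀) F).PairwiseDisjoint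
          DyadicCube.toSet := fun Q₁ h₁ Q₂ h₂ hne =>
        ch_pairwiseDisjoint hd F (hsub h₁) (hsub h₂) hne
      have hFfin : μ F.toSet < ⊤ :=
        lt_of_le_of_lt (measure_mono (famF_subset_F₀ F₀ hF)) hF₀fin
      calc ∑' F' : sparseChildren (famF μ lam f med F₀) F, μ (F' : DyadicCube d).toSet
          = μ (⋃ F' ∈ sparseChildren (famF μ lam f med F₀) F, DyadicCube.toSet F') :=
            (measure_biUnion (Set.to_countable _) hdisj
              (fun Q _ => Q.measurableSet_toSet)).symm
      _ ≤ μ (⋃ Q ∈ ch μ lam f med F, DyadicCube.toSet Q) :=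
            measure_mono (Set.biUnion_subset_biUnion_left hsub)
      _ ≤ ∑' Q : ch μ lam f med F, μ (Q : DyadicCube d).toSet :=
            measure_biUnion_le μ (Set.to_countable _) _
      _ ≤ ENNReal.ofReal (2 * lam) * μ F.toSet := ch_tsum_le hd hf hlam0 F hFfin
    · have hfinF : ∀ F ∈ famF μ lam f med F₀, μ F.toSet < ⊤ := fun F hF =>
        lt_of_le_of_lt (measure_mono (famF_subset_F₀ F₀ hF)) hF₀fin
      have hZ1 : μ (⋃ F ∈ famF μ lam f med F₀,
          (Ebad μ lam f med F \ ⋃ Q ∈ ch μ lam f med F, DyadicCube.toSet Q)) = 0 := by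
        rw [measure_biUnion_null_iff (Set.to_countable _)]
        exact fun F hF => Ebad_diff_children_null hd hf (hfinF F hF)
      have hZ2 : μ (⋃ F ∈ {F ∈ famF μ lam f med F₀ | μ F.toSet = 0},
          DyadicCube.toSet F) = 0 := by
        rw [measure_biUnion_null_iff (Set.to_countable _)]
        exact fun F hF => hF.2
      have hZ3 : μ (⋂ k, ⋃ F ∈ gen μ lam f med F₀ k, DyadicCube.toSet F) = 0 := by
        have hlt1 : ENNReal.ofReal (2 * lam) < 1 := by
          rw [ENNReal.ofReal_lt_one]
          linarith
        have htend : Filter.Tendsto (fun k => (ENNReal.ofReal (2 * lam))^k * μ F₀.toSet)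
            Filter.atTop (nhds (0 * μ F₀.toSet)) :=
          ENNReal.Tendsto.mul_const
            (ENNReal.tendsto_pow_atTop_nhds_zero_of_lt_one hlt1) (Or.inr hF₀fin.ne)
        rw [zero_mul] at htend
        refine le_antisymm (ge_of_tendsto' htend fun k => ?_) (zero_le)
        exact le_trans (measure_mono (Set.iInter_subset _ k))
          (gen_biUnion_measure_le F₀ hd hf hlam0 hF₀fin k)
      have hae : ∀ᵐ x ∂μ, x ∉ ((⋃ F ∈ famF μ lam f med F₀,
          (Ebad μ lam f med F \ ⋃ Q ∈ ch μ lam f med F, DyadicCube.toSet Q)) ∪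
          (⋃ F ∈ {F ∈ famF μ lam f med F₀ | μ F.toSet = 0}, DyadicCube.toSet F)) ∪
          (⋂ k, ⋃ F ∈ gen μ lam f med F₀ k, DyadicCube.toSet F) := by
        rw [← MeasureTheory.measure_eq_zero_iff_ae_notMem]
        exact measure_union_null (measure_union_null hZ1 hZ2) hZ3
      filter_upwards [hae] with x hxZ hxF₀
      rw [Set.mem_union, Set.mem_union] at hxZ
      push_neg at hxZ
      obtain ⟨⟨hxZ1, hxZ2⟩, hxZ3⟩ := hxZ
      obtain ⟨k, hk⟩ : ∃ k, x ∉ ⋃ F ∈ gen μ lam f med F₀ k, DyadicCube.toSet F := by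
        by_contra hcon
        push_neg at hcon
        exact hxZ3 (Set.mem_iInter.2 hcon)
      cases k with
      | zero =>
        exact absurd (Set.mem_biUnion (show F₀ ∈ gen μ lam f med F₀ 0 from rfl) hxF₀) hk
      | succ K =>
        have hnb : ∀ F ∈ famF μ lam f med F₀,
            x ∉ Ebad μ lam f med F \ ⋃ Q ∈ ch μ lam f med F, DyadicCube.toSet Q :=
          fun F hF hcon => hxZ1 (Set.mem_biUnion hF hcon)
        obtain ⟨S, hSfam, hF₀S, hSmem, hSbound⟩ :=
          chain_bound F₀ hd hf hlam0 hmed hF₀fin hk hnb (K+1) 0 F₀ rfl hxF₀ (by omega)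
        have hSpos : ∀ G ∈ S, 0 < μ G.toSet := by
          intro G hG
          by_contra hcon
          push_neg at hcon
          have h0 : μ G.toSet = 0 := le_antisymm hcon (zero_le)
          exact hxZ2 (Set.mem_biUnion
            (show G ∈ {F ∈ famF μ lam f med F₀ | μ F.toSet = 0} from ⟨hSfam hG, h0⟩)
            (hSmem G hG).1)
        have hrQ : ∀ G ∈ S, rQ μ lam f med G ≤ 2 * mOsc μ lam f G.toSet := fun G hG =>
          rOsc_med_le_two_mOsc hlam0 hlam1 G.measurableSet_toSet hf (hSpos G hG)
            (hfinF G (hSfam hG)) (hmed G (hSpos G hG))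
        have hreal : |f x - med F₀.parent| ≤
            2 * ∑ G ∈ S, (mOsc μ lam f G.toSet + |med G - med G.parent|) := by
          have h1 : |f x - med F₀.parent| ≤
              |f x - med F₀| + |med F₀ - med F₀.parent| := abs_sub_le _ _ _
          have h5 : (rQ μ lam f med F₀ + |med F₀ - med F₀.parent|) +
              ∑ G ∈ S.erase F₀, (rQ μ lam f med G + |med G - med G.parent|) =
              ∑ G ∈ S, (rQ μ lam f med G + |med G - med G.parent|) := by
            simpa using Finset.add_sum_erase S
              (fun G => rQ μ lam f med G + |med G - med G.parent|) hF₀S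
          have h3 : ∑ G ∈ S, (rQ μ lam f med G + |med G - med G.parent|) ≤
              ∑ G ∈ S, 2 * (mOsc μ lam f G.toSet + |med G - med G.parent|) := by
            refine Finset.sum_le_sum fun G hG => ?_
            have := hrQ G hG
            have := abs_nonneg (med G - med G.parent)
            linarith
          have h4 : ∑ G ∈ S, 2 * (mOsc μ lam f G.toSet + |med G - med G.parent|) =
              2 * ∑ G ∈ S, (mOsc μ lam f G.toSet + |med G - med G.parent|) :=
            (Finset.mul_sum _ _ _).symm
          linarith
        have h6 : ∑ G ∈ S, ENNReal.ofReal
            (mOsc μ lam f G.toSet + |med G - med G.parent|) ≤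
            ∑' F : famF μ lam f med F₀, (F : DyadicCube d).toSet.indicator
              (fun _ => ENNReal.ofReal (mOsc μ lam f (F : DyadicCube d).toSet +
                |med (F : DyadicCube d) - med (F : DyadicCube d).parent|)) x := by
          have ht : (∑' F : famF μ lam f med F₀, (F : DyadicCube d).toSet.indicator
              (fun _ => ENNReal.ofReal (mOsc μ lam f (F : DyadicCube d).toSet +
                |med (F : DyadicCube d) - med (F : DyadicCube d).parent|)) x) =
              ∑' Q : DyadicCube d, Set.indicator (famF μ lam f med F₀)
                (fun Q => Q.toSet.indicator (fun _ => ENNReal.ofReal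
                  (mOsc μ lam f Q.toSet + |med Q - med Q.parent|)) x) Q :=
            tsum_subtype (famF μ lam f med F₀) (fun Q => Q.toSet.indicator
              (fun _ => ENNReal.ofReal
                (mOsc μ lam f Q.toSet + |med Q - med Q.parent|)) x)
          rw [ht]
          refine le_trans (le_of_eq (Finset.sum_congr rfl fun G hG => ?_))
            (ENNReal.sum_le_tsum S)
          simp only [Set.indicator_of_mem (hSfam hG),
            Set.indicator_of_mem (hSmem G hG).1]
        have hwnn : ∀ G ∈ S, 0 ≤ mOsc μ lam f G.toSet + |med G - med G.parent| :=
          fun G _ => add_nonneg mOsc_nonneg (abs_nonneg _)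
        calc ENNReal.ofReal |f x - med F₀.parent|
            ≤ ENNReal.ofReal (2 * ∑ G ∈ S,
              (mOsc μ lam f G.toSet + |med G - med G.parent|)) :=
              ENNReal.ofReal_le_ofReal hreal
        _ = ENNReal.ofReal 2 * ENNReal.ofReal (∑ G ∈ S,
              (mOsc μ lam f G.toSet + |med G - med G.parent|)) :=
              ENNReal.ofReal_mul (by norm_num)
        _ = ENNReal.ofReal 2 * ∑ G ∈ S, ENNReal.ofReal
              (mOsc μ lam f G.toSet + |med G - med G.parent|) := by
              rw [ENNReal.ofReal_sum_of_nonneg hwnn]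
        _ ≤ ENNReal.ofReal 2 * ∑' F : famF μ lam f med F₀,
              (F : DyadicCube d).toSet.indicator
                (fun _ => ENNReal.ofReal (mOsc μ lam f (F : DyadicCube d).toSet +
                  |med (F : DyadicCube d) - med (F : DyadicCube d).parent|)) x :=
              mul_le_mul_right h6 _
end
end

section
/- Equivalence of oscillation quantities: for any dyadic cube F with 0 < μ(F) < ∞ and any 0 < λ < 1/2, ω_λ(f;F) + |m(f,F) − m(f,F̂)| ≍ r_λ(f − m(f;F̂); F), with implicit constants absolute. -/
open MeasureTheory Set ENNReal NNReal

noncomputable section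

open Filter

lemma toSet_measurable {d : ℕ} (Q : DyadicCube d) : MeasurableSet Q.toSet := by
  have h : Q.toSet = ⋂ i, {x : Fin d → ℝ |
      (Q.m i : ℝ) * 2 ^ Q.n ≤ x i ∧ x i < ((Q.m i : ℝ) + 1) * 2 ^ Q.n} := by
    ext x; simp [DyadicCube.toSet]
  rw [h]
  exact MeasurableSet.iInter fun i =>
    (measurableSet_le measurable_const (measurable_pi_apply i)).inter
      (measurableSet_lt (measurable_pi_apply i) measurable_const)

section Aux

variable {d : ℕ} {μ : Measure (Fin d → ℝ)} {f : (Fin d → ℝ) → ℝ}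
  {Q : Set (Fin d → ℝ)} {lam : ℝ}

/-- the defining set of `rOsc`. -/
def rSet (μ : Measure (Fin d → ℝ)) (lam : ℝ) (g : (Fin d → ℝ) → ℝ)
    (Q : Set (Fin d → ℝ)) : Set ℝ :=
  {r : ℝ | 0 ≤ r ∧ μ (Q ∩ {x | r < |g x|}) ≤ ENNReal.ofReal lam * μ Q}

lemma rSet_bddBelow (g : (Fin d → ℝ) → ℝ) : BddBelow (rSet μ lam g Q) :=
  ⟨0, fun _ hr => hr.1⟩

lemma rSet_nonempty (hQ : MeasurableSet Q) (hf : Measurable f) (c : ℝ)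
    (hμt : μ Q ≠ ⊤) (hpos : 0 < ENNReal.ofReal lam * μ Q) :
    (rSet μ lam (fun x => f x - c) Q).Nonempty := by
  set s : ℕ → Set (Fin d → ℝ) := fun n => Q ∩ {x | (n : ℝ) < |f x - c|} with hs
  have hmeas : ∀ n, NullMeasurableSet (s n) μ := fun n =>
    (hQ.inter (measurableSet_lt measurable_const ((hf.sub measurable_const).abs))).nullMeasurableSet
  have hanti : Antitone s := by
    intro n m hnm x hx
    have hx2 : (m : ℝ) < |f x - c| := hx.2
    exact ⟨hx.1, lt_of_le_of_lt (by exact_mod_cast hnm) hx2⟩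
  have hfin : ∃ n, μ (s n) ≠ ⊤ := ⟨0, fun h => hμt (top_le_iff.mp (h ▸ measure_mono inter_subset_left))⟩
  have hempty : ⋂ n, s n = ∅ := by
    ext x
    simp only [mem_iInter, mem_empty_iff_false, iff_false, not_forall]
    obtain ⟨n, hn⟩ := exists_nat_gt |f x - c|
    exact ⟨n, fun hx => absurd hx.2 (not_lt.mpr hn.le)⟩
  have htend : Tendsto (μ ∘ s) atTop (nhds 0) := by
    have := tendsto_measure_iInter_atTop hmeas hanti hfin
    rwa [hempty, measure_empty] at this
  have : ∀ᶠ n in atTop, μ (s n) < ENNReal.ofReal lam * μ Q :=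
    htend.eventually_lt_const hpos
  obtain ⟨n, hn⟩ := this.exists
  exact ⟨(n : ℝ), Nat.cast_nonneg n, hn.le⟩

/-- the key median estimate: any element of the defining set dominates `|m - c|`. -/
lemma median_dist_le {mF c r : ℝ} (_hμ0 : μ Q ≠ 0) (hμt : μ Q ≠ ⊤)
    (hlam : ENNReal.ofReal lam * μ Q < μ Q / 2)
    (hmed : IsMedian μ f Q mF)
    (hr : r ∈ rSet μ lam (fun x => f x - c) Q) : |mF - c| ≤ r := by
  obtain ⟨hr0, hrμ⟩ := hr
  have hA : μ Q / 2 < μ (Q ∩ {x | |f x - c| ≤ r}) := by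
    by_contra h
    push_neg at h
    have hsplit : μ Q ≤ μ (Q ∩ {x | |f x - c| ≤ r}) + μ (Q ∩ {x | r < |f x - c|}) := by
      refine le_trans (measure_mono ?_) (measure_union_le _ _)
      intro x hx
      rcases le_or_gt (|f x - c|) r with h' | h'
      · exact Or.inl ⟨hx, h'⟩
      · exact Or.inr ⟨hx, h'⟩
    have : μ Q < μ Q / 2 + μ Q / 2 := by
      refine lt_of_le_of_lt hsplit ?_
      exact ENNReal.add_lt_add_of_le_of_lt
        (ne_top_of_le_ne_top (by simpa using hμt) (h.trans ENNReal.half_le_self))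
        h (hrμ.trans_lt hlam)
    rw [ENNReal.add_halves] at this
    exact lt_irrefl _ this
  rw [abs_le]
  constructor
  · by_contra h
    push_neg at h
    have hsub : Q ∩ {x | |f x - c| ≤ r} ⊆ Q ∩ {x | mF < f x} := by
      rintro x ⟨hxQ, hx⟩
      refine ⟨hxQ, ?_⟩
      have hx' : |f x - c| ≤ r := hx
      have := abs_le.mp hx'
      simp only [mem_setOf_eq]
      linarith [this.1]
    exact absurd (le_trans (measure_mono hsub) hmed.1) (not_le.mpr hA)
  · by_contra h
    push_neg at h
    have hsub : Q ∩ {x | |f x - c| ≤ r} ⊆ Q ∩ {x | f x < mF} := by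
      rintro x ⟨hxQ, hx⟩
      refine ⟨hxQ, ?_⟩
      have hx' : |f x - c| ≤ r := hx
      have := abs_le.mp hx'
      simp only [mem_setOf_eq]
      linarith [this.2]
    exact absurd (le_trans (measure_mono hsub) hmed.2) (not_le.mpr hA)

lemma rSet_translate {c c' r : ℝ} (hr : r ∈ rSet μ lam (fun x => f x - c) Q) :
    r + |c - c'| ∈ rSet μ lam (fun x => f x - c') Q := by
  obtain ⟨hr0, hrμ⟩ := hr
  refine ⟨by positivity, le_trans (measure_mono ?_) hrμ⟩
  rintro x ⟨hxQ, hx⟩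
  refine ⟨hxQ, ?_⟩
  simp only [mem_setOf_eq] at hx ⊢
  have h1 : |f x - c'| ≤ |f x - c| + |c - c'| := by
    calc |f x - c'| = |(f x - c) + (c - c')| := by ring_nf
    _ ≤ |f x - c| + |c - c'| := abs_add_le _ _
  linarith

end Aux

/-- equivalence of oscillation quantities, with absolute constants. -/

theorem oscillation_quantities_equivalent :
    ∃ c C : ℝ, 0 < c ∧ 0 < C ∧
      ∀ (d : ℕ) (μ : Measure (Fin d → ℝ)), IsLocallyFiniteMeasure μ →
      ∀ (f : (Fin d → ℝ) → ℝ), Measurable f →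
      ∀ (lam : ℝ), 0 < lam → lam < 1 / 2 →
      ∀ (F : DyadicCube d), 0 < μ F.toSet → μ F.toSet < ⊤ → μ F.parent.toSet < ⊤ →
      ∀ (mF mFp : ℝ), IsMedian μ f F.toSet mF → IsMedian μ f F.parent.toSet mFp →
        c * (mOsc μ lam f F.toSet + |mF - mFp|) ≤
            rOsc μ lam (fun x => f x - mFp) F.toSet ∧
          rOsc μ lam (fun x => f x - mFp) F.toSet ≤
            C * (mOsc μ lam f F.toSet + |mF - mFp|) := by
  refine ⟨1/2, 2, by norm_num, by norm_num, ?_⟩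
  intro d μ _ f hf lam hlam hlam2 F hμ0 hμt _ mF mFp hmF _
  set Q := F.toSet with hQdef
  have hQmeas : MeasurableSet Q := toSet_measurable F
  have hμ0' : μ Q ≠ 0 := hμ0.ne'
  have hμt' : μ Q ≠ ⊤ := hμt.ne
  have hpos : 0 < ENNReal.ofReal lam * μ Q :=
    ENNReal.mul_pos (ENNReal.ofReal_pos.mpr hlam).ne' hμ0'
  have hhalf : ENNReal.ofReal lam * μ Q < μ Q / 2 := by
    have h1 : ENNReal.ofReal lam < ENNReal.ofReal (1/2) :=
      (ENNReal.ofReal_lt_ofReal_iff (by norm_num)).mpr hlam2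
    have h2 : ENNReal.ofReal (1/2 : ℝ) = (2 : ℝ≥0∞)⁻¹ := by
      rw [ENNReal.ofReal_div_of_pos (by norm_num)]
      norm_num
    rw [h2] at h1
    rw [ENNReal.div_eq_inv_mul]
    rw [mul_comm _ (μ Q), mul_comm _ (μ Q)]
    exact ENNReal.mul_lt_mul_right hμ0' hμt' h1
  have hrOsc_eq : ∀ c : ℝ, rOsc μ lam (fun x => f x - c) Q =
      sInf (rSet μ lam (fun x => f x - c) Q) := fun c => rfl
  have hne : ∀ c : ℝ, (rSet μ lam (fun x => f x - c) Q).Nonempty :=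
    fun c => rSet_nonempty hQmeas hf c hμt' hpos
  have hmed_le : ∀ c : ℝ, |mF - c| ≤ rOsc μ lam (fun x => f x - c) Q := fun c => by
    rw [hrOsc_eq]
    exact le_csInf (hne c) (fun r hr => median_dist_le hμ0' hμt' hhalf hmF hr)
  have hnonneg : ∀ c : ℝ, 0 ≤ rOsc μ lam (fun x => f x - c) Q := fun c =>
    Real.sInf_nonneg (fun r hr => hr.1)
  have htrans : ∀ c c' : ℝ, rOsc μ lam (fun x => f x - c') Q ≤
      rOsc μ lam (fun x => f x - c) Q + |c - c'| := by
    intro c c'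
    rw [hrOsc_eq, hrOsc_eq]
    have key : sInf (rSet μ lam (fun x => f x - c') Q) - |c - c'| ≤
        sInf (rSet μ lam (fun x => f x - c) Q) := by
      refine le_csInf (hne c) (fun r hr => ?_)
      have := csInf_le (rSet_bddBelow (fun x => f x - c'))
        (rSet_translate (c' := c') hr)
      linarith
    linarith
  have hbddi : BddBelow (Set.range fun c : ℝ => rOsc μ lam (fun x => f x - c) Q) :=
    ⟨0, by rintro _ ⟨c, rfl⟩; exact hnonneg c⟩
  have hmle : mOsc μ lam f Q ≤ rOsc μ lam (fun x => f x - mFp) Q := ciInf_le hbddi mFp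
  have hlow : (rOsc μ lam (fun x => f x - mFp) Q - |mF - mFp|) / 2 ≤ mOsc μ lam f Q := by
    refine le_ciInf fun c => ?_
    have h1 := htrans c mFp
    have h2 := hmed_le c
    have h3 : |c - mFp| ≤ |c - mF| + |mF - mFp| := by
      calc |c - mFp| = |(c - mF) + (mF - mFp)| := by ring_nf
      _ ≤ _ := abs_add_le _ _
    have h4 : |c - mF| = |mF - c| := abs_sub_comm _ _
    linarith
  have habs : |mF - mFp| ≤ rOsc μ lam (fun x => f x - mFp) Q := hmed_le mFp
  have hab0 : (0:ℝ) ≤ |mF - mFp| := abs_nonneg _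
  exact ⟨by linarith, by linarith⟩
end
end
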